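/- arXiv:0904.4507 — 4 statements merged into one kernel-verified Lean document; each statement's English description precedes it below -/
import Mathlib

section
/- For the rotor walk on Z^2 with anticlockwise rotors started from the spiral initial configuration (with b,c sinks returning to a), between any two times at which the walk enters a new layer partial B(k) = B(k) \ B(k-1), it must visit the starting vertex a at least once; and between any two consecutive visits to a, no vertex is visited more than 4 times. -/
open scoped BigOperators Classical

/-- `(x, r)` is a rotor walk for the rotor mechanism `(d, succ)`.  Rotor values are
`0`-based: rotor value `j` at `u` means the rotor points to `succ u j`
(corresponding to `u^(j+1)` in `1`-based notation).  At each step the rotor at the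
current particle position is incremented cyclically and the particle moves in the
new rotor direction. -/
def IsRotorWalk {V : Type*} (d : V → ℕ) (succ : V → ℕ → V)
    (x : ℕ → V) (r : ℕ → V → ℕ) : Prop :=
  (∀ v, r 0 v < d v) ∧
  (∀ t, r (t + 1) (x t) = (r t (x t) + 1) % d (x t)) ∧
  (∀ t v, v ≠ x t → r (t + 1) v = r t v) ∧
  (∀ t, x (t + 1) = succ (x t) (r (t + 1) (x t)))

/-- the number of visits of the walk `x` to `v` strictly before time `t` -/
noncomputable def nvisits {V : Type*} (x : ℕ → V) (t : ℕ) (v : V) : ℕ :=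
  ((Finset.range t).filter fun s => x s = v).card

/-- the rotor mechanism `(d, succ)` realizes the transition kernel `p`:
`p u v` is the proportion of the `d u` successors of `u` equal to `v` -/
def Realizes {V : Type*} (d : V → ℕ) (succ : V → ℕ → V) (p : V → V → ℝ) : Prop :=
  (∀ u, 0 < d u) ∧
  ∀ u v, p u v = ((Finset.range (d u)).filter fun i => succ u i = v).card / d u

/-- the anticlockwise rotor mechanism on ℤ²: in `0`-based indexing, rotor value `j`
points to `u^(j+1) = u + (cos ((j+1)π/2), sin ((j+1)π/2))`, i.e.
`j = 0` → North, `1` → West, `2` → South, `3` → East. -/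
def succZ2 (u : ℤ × ℤ) (i : ℕ) : ℤ × ℤ :=
  match i % 4 with
  | 0 => (u.1, u.2 + 1)
  | 1 => (u.1 - 1, u.2)
  | 2 => (u.1, u.2 - 1)
  | _ => (u.1 + 1, u.2)

/-- `arg` with values in `[0, 2π)` -/
noncomputable def arg2 (z : ℂ) : ℝ :=
  if Complex.arg z < 0 then Complex.arg z + 2 * Real.pi else Complex.arg z

/-- the spiral initial rotor configuration
`r((x,y)) = ⌊1/2 + (2/π) arg(x - 1/2, y - 1/2)⌋ mod 4`, translated to the `0`-based
indexing of `succZ2` (the paper's value `m ∈ {0,1,2,3}` denotes the rotor pointing to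
`u^(m)` with `0 ≡ 4`, i.e. the `0`-based value `(m+3) % 4`). -/
noncomputable def spiralRotor (v : ℤ × ℤ) : ℕ :=
  ((⌊(1 : ℝ) / 2 + (2 / Real.pi) * arg2 ⟨(v.1 : ℝ) - 1 / 2, (v.2 : ℝ) - 1 / 2⟩⌋).toNat
    + 3) % 4

/-- degrees for the walk modified so that `b` and `c` are sent straight back to `a` -/
def dMod (b c : ℤ × ℤ) : ℤ × ℤ → ℕ := fun u => if u = b ∨ u = c then 1 else 4

/-- successors for the modified walk: `b` and `c` send the particle straight to `a` -/
def succMod (a b c : ℤ × ℤ) : ℤ × ℤ → ℕ → ℤ × ℤ := fun u i =>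
  if u = b ∨ u = c then a else succZ2 u i

/-- the spiral initial configuration, modified at the degree-one vertices `b, c` -/
noncomputable def rotInit (b c : ℤ × ℤ) : ℤ × ℤ → ℕ := fun v =>
  if v = b ∨ v = c then 0 else spiralRotor v

/-- `v ∈ B(k) = ((-k, k] ∩ ℤ)²` -/
def inB (k : ℕ) (v : ℤ × ℤ) : Prop :=
  -(k : ℤ) < v.1 ∧ v.1 ≤ k ∧ -(k : ℤ) < v.2 ∧ v.2 ≤ k

/-- the walk enters a new layer at time `t`: for some `k ≥ 1`, `x_0, …, x_{t-1} ∈ B(k)`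
but `x_t ∉ B(k)` -/
def entersNewLayer (x : ℕ → ℤ × ℤ) (t : ℕ) : Prop :=
  ∃ k : ℕ, 1 ≤ k ∧ (∀ s < t, inB k (x s)) ∧ ¬ inB k (x t)

section LayersProof
open Real Set

namespace SpiralAux

lemma floor_formula (θ : ℝ) (n : ℕ) (h1 : (2*(n:ℝ) - 1) * Real.pi / 4 ≤ θ)
    (h2 : θ < (2*(n:ℝ)+1) * Real.pi / 4) : ⌊(1:ℝ)/2 + 2/Real.pi * θ⌋ = n := by
  have hπ := Real.pi_pos
  rw [Int.floor_eq_iff]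
  have h2p : (0:ℝ) < 2 / Real.pi := by positivity
  have e1 : 2/Real.pi * ((2*(n:ℝ)-1) * Real.pi/4) = (2*(n:ℝ)-1)/2 := by
    field_simp; ring
  have e2 : 2/Real.pi * ((2*(n:ℝ)+1) * Real.pi/4) = (2*(n:ℝ)+1)/2 := by
    field_simp; ring
  have l1 := mul_le_mul_of_nonneg_left h1 h2p.le
  have l2 := mul_lt_mul_of_pos_left h2 h2p
  rw [e1] at l1; rw [e2] at l2
  push_cast
  constructor <;> linarith

variable {p q : ℝ}

lemma tan_arg_mk : Real.tan (Complex.arg ⟨p,q⟩) = q / p := by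
  simpa using Complex.tan_arg ⟨p, q⟩

lemma arg_mem_pos (hp : 0 < p) : Complex.arg ⟨p, q⟩ ∈ Ioo (-(π/2)) (π/2) := by
  constructor
  · exact Complex.neg_pi_div_two_lt_arg_iff.2 (Or.inl hp)
  · exact Complex.arg_lt_pi_div_two_iff.2 (Or.inl hp)

lemma pi_div_four_mem : π/4 ∈ Ioo (-(π/2)) (π/2) := by
  have := Real.pi_pos; constructor <;> [linarith; linarith]

lemma neg_pi_div_four_mem : -(π/4) ∈ Ioo (-(π/2)) (π/2) := by
  have := Real.pi_pos; constructor <;> [linarith; linarith]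

lemma c_pos_ge (hp : 0 < p) : π/4 ≤ Complex.arg ⟨p,q⟩ ↔ p ≤ q := by
  rw [← Real.strictMonoOn_tan.le_iff_le pi_div_four_mem (arg_mem_pos hp),
    Real.tan_pi_div_four, tan_arg_mk, one_le_div hp]

lemma c_pos_ge_neg (hp : 0 < p) : -(π/4) ≤ Complex.arg ⟨p,q⟩ ↔ -p ≤ q := by
  rw [← Real.strictMonoOn_tan.le_iff_le neg_pi_div_four_mem (arg_mem_pos hp),
    Real.tan_neg, Real.tan_pi_div_four, tan_arg_mk, le_div_iff₀ hp]
  constructor <;> intro h <;> linarith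

lemma arg_mem_q2 (hp : p < 0) (hq : 0 < q) : Complex.arg ⟨p, q⟩ ∈ Ioo (π/2) π := by
  constructor
  · rcases lt_or_ge (π/2) (Complex.arg ⟨p,q⟩) with h | h
    · exact h
    · exfalso
      rcases Complex.arg_le_pi_div_two_iff.1 h with h' | h'
      · exact absurd h' (by simpa using hp.not_ge)
      · exact absurd h' (by simpa using hq.not_gt)
  · refine lt_of_le_of_ne (Complex.arg_le_pi _) ?_
    rw [Ne, Complex.arg_eq_pi_iff]
    rintro ⟨-, h⟩
    exact hq.ne' (by simpa using h)

lemma c_q2 (hp : p < 0) (hq : 0 < q) : 3*π/4 ≤ Complex.arg ⟨p,q⟩ ↔ q ≤ -p := by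
  have hmem := arg_mem_q2 (q := q) hp hq
  have hmem' : Complex.arg ⟨p,q⟩ - π ∈ Ioo (-(π/2)) (π/2) := by
    have := Real.pi_pos
    constructor <;> [linarith [hmem.1]; linarith [hmem.2]]
  have key : 3*π/4 ≤ Complex.arg ⟨p,q⟩ ↔ -(π/4) ≤ Complex.arg ⟨p,q⟩ - π := by
    constructor <;> intro h <;> linarith
  rw [key, ← Real.strictMonoOn_tan.le_iff_le neg_pi_div_four_mem hmem',
    Real.tan_neg, Real.tan_pi_div_four, Real.tan_periodic.sub_eq, tan_arg_mk,
    le_div_iff_of_neg hp]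
  constructor <;> intro h <;> linarith

lemma arg_mem_q3 (hp : p < 0) (hq : q < 0) : Complex.arg ⟨p, q⟩ ∈ Ioo (-π) (-(π/2)) := by
  constructor
  · exact Complex.neg_pi_lt_arg _
  · rcases lt_or_ge (Complex.arg ⟨p,q⟩) (-(π/2)) with h | h
    · exact h
    · exfalso
      rcases Complex.neg_pi_div_two_le_arg_iff.1 h with h' | h'
      · exact absurd h' (by simpa using hp.not_ge)
      · exact absurd h' (by simpa using hq.not_ge)

lemma c_q3 (hp : p < 0) (hq : q < 0) : -(3*π/4) ≤ Complex.arg ⟨p,q⟩ ↔ q ≤ p := by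
  have hmem := arg_mem_q3 (q := q) hp hq
  have hmem' : Complex.arg ⟨p,q⟩ + π ∈ Ioo (-(π/2)) (π/2) := by
    have := Real.pi_pos
    constructor <;> [linarith [hmem.1]; linarith [hmem.2]]
  have key : -(3*π/4) ≤ Complex.arg ⟨p,q⟩ ↔ π/4 ≤ Complex.arg ⟨p,q⟩ + π := by
    constructor <;> intro h <;> linarith
  rw [key, ← Real.strictMonoOn_tan.le_iff_le pi_div_four_mem hmem',
    Real.tan_pi_div_four, Real.tan_periodic, tan_arg_mk, one_le_div_of_neg hp]

end SpiralAux

def mSpiral (v : ℤ × ℤ) : ℕ :=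
  if 2 ≤ v.1 + v.2 ∧ v.1 ≤ v.2 then 1
  else if v.1 + v.2 ≤ 1 ∧ v.1 < v.2 then 2
  else if v.1 + v.2 ≤ 0 ∧ v.2 ≤ v.1 then 3
  else 0

open SpiralAux in
theorem spiralRotor_eq (v : ℤ × ℤ) : spiralRotor v = (mSpiral v + 3) % 4 := by
  obtain ⟨X, Y⟩ := v
  set p : ℝ := (X:ℝ) - 1/2 with hpdef
  set q : ℝ := (Y:ℝ) - 1/2 with hqdef
  have hπ := Real.pi_pos
  have hz : (⟨(X:ℝ) - 1/2, (Y:ℝ) - 1/2⟩ : ℂ) = ⟨p, q⟩ := rfl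
  have harg2 : arg2 ⟨p, q⟩
      = if Complex.arg ⟨p, q⟩ < 0 then Complex.arg ⟨p, q⟩ + 2*π else Complex.arg ⟨p, q⟩ := rfl
  have main : ∃ n : ℕ, (2*(n:ℝ) - 1) * π / 4 ≤ arg2 ⟨p,q⟩ ∧
      arg2 ⟨p,q⟩ < (2*(n:ℝ)+1) * π / 4 ∧ n % 4 = mSpiral (X, Y) % 4 := by
    by_cases h1 : 2 ≤ X + Y ∧ X ≤ Y
    · -- m = 1 : q > 0, pi/4 <= arg < 3pi/4
      have hXYr : (2:ℝ) ≤ (X:ℝ) + (Y:ℝ) := by exact_mod_cast h1.1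
      have hXYle : (X:ℝ) ≤ (Y:ℝ) := by exact_mod_cast h1.2
      have hpq : p ≤ q := by rw [hpdef, hqdef]; linarith
      have hpq2 : -p < q := by rw [hpdef, hqdef]; linarith
      have hq : 0 < q := by linarith
      have hA0 : 0 ≤ Complex.arg ⟨p, q⟩ := Complex.arg_nonneg_iff.2 (by simpa using hq.le)
      have low : π/4 ≤ Complex.arg ⟨p, q⟩ := by
        rcases lt_trichotomy p 0 with hp | hp | hp
        · have := (arg_mem_q2 (q := q) hp hq).1; linarith
        · exfalso
          have : (2*X : ℝ) = 1 := by rw [hpdef] at hp; linarith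
          have : (2*X : ℤ) = 1 := by exact_mod_cast this
          omega
        · exact (c_pos_ge hp).2 hpq
      have high : Complex.arg ⟨p, q⟩ < 3*π/4 := by
        rcases lt_trichotomy p 0 with hp | hp | hp
        · by_contra h
          push_neg at h
          have := (c_q2 hp hq).1 h
          linarith
        · exfalso
          have : (2*X : ℝ) = 1 := by rw [hpdef] at hp; linarith
          have : (2*X : ℤ) = 1 := by exact_mod_cast this
          omega
        · have := (arg_mem_pos (q := q) hp).2; linarith
      refine ⟨1, ?_, ?_, ?_⟩
      · rw [harg2, if_neg (not_lt.2 hA0)]; push_cast; linarith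
      · rw [harg2, if_neg (not_lt.2 hA0)]; push_cast; linarith
      · simp [mSpiral, h1]
    · by_cases h2 : X + Y ≤ 1 ∧ X < Y
      · -- m = 2 : p < 0
        have hXYr : (X:ℝ) + (Y:ℝ) ≤ 1 := by exact_mod_cast h2.1
        have hXYlt : (X:ℝ) < (Y:ℝ) := by exact_mod_cast h2.2
        have hpq : p < q := by rw [hpdef, hqdef]; linarith
        have hpq2 : p ≤ -q := by rw [hpdef, hqdef]; linarith
        have hp : p < 0 := by linarith
        rcases lt_trichotomy q 0 with hq | hq | hq
        · have hmem := arg_mem_q3 (q := q) hp hq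
          have hA0 : Complex.arg ⟨p, q⟩ < 0 := lt_trans hmem.2 (by linarith)
          have high : Complex.arg ⟨p, q⟩ < -(3*π/4) := by
            by_contra h
            push_neg at h
            exact absurd ((c_q3 hp hq).1 h) (by linarith)
          refine ⟨2, ?_, ?_, ?_⟩
          · rw [harg2, if_pos hA0]; push_cast; have := hmem.1; linarith
          · rw [harg2, if_pos hA0]; push_cast; linarith
          · simp [mSpiral, h1, h2]
        · exfalso
          have : (2*Y : ℝ) = 1 := by rw [hqdef] at hq; linarith
          have : (2*Y : ℤ) = 1 := by exact_mod_cast this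
          omega
        · have hmem := arg_mem_q2 (q := q) hp hq
          have hA0 : 0 ≤ Complex.arg ⟨p, q⟩ := le_trans (by linarith) hmem.1.le
          have low : 3*π/4 ≤ Complex.arg ⟨p, q⟩ := (c_q2 hp hq).2 (by linarith)
          have high : Complex.arg ⟨p, q⟩ < π := hmem.2
          refine ⟨2, ?_, ?_, ?_⟩
          · rw [harg2, if_neg (not_lt.2 hA0)]; push_cast; linarith
          · rw [harg2, if_neg (not_lt.2 hA0)]; push_cast; linarith
          · simp [mSpiral, h1, h2]
      · by_cases h3 : X + Y ≤ 0 ∧ Y ≤ X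
        · -- m = 3 : q < 0
          have hXYr : (X:ℝ) + (Y:ℝ) ≤ 0 := by exact_mod_cast h3.1
          have hYXr : (Y:ℝ) ≤ (X:ℝ) := by exact_mod_cast h3.2
          have hqp : q ≤ p := by rw [hpdef, hqdef]; linarith
          have hqp2 : q < -p := by rw [hpdef, hqdef]; linarith
          have hq : q < 0 := by linarith
          have hA0 : Complex.arg ⟨p, q⟩ < 0 := Complex.arg_neg_iff.2 (by simpa using hq)
          rcases lt_trichotomy p 0 with hp | hp | hp
          · have hmem := arg_mem_q3 (q := q) hp hq
            have low : -(3*π/4) ≤ Complex.arg ⟨p, q⟩ := (c_q3 hp hq).2 hqp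
            refine ⟨3, ?_, ?_, ?_⟩
            · rw [harg2, if_pos hA0]; push_cast; linarith
            · rw [harg2, if_pos hA0]; push_cast; have := hmem.2; linarith
            · simp [mSpiral, h1, h2, h3]
          · exfalso
            have : (2*X : ℝ) = 1 := by rw [hpdef] at hp; linarith
            have : (2*X : ℤ) = 1 := by exact_mod_cast this
            omega
          · have hmem := arg_mem_pos (q := q) hp
            have high : Complex.arg ⟨p, q⟩ < -(π/4) := by
              by_contra h
              push_neg at h
              exact absurd ((c_pos_ge_neg hp).1 h) (by linarith)
            refine ⟨3, ?_, ?_, ?_⟩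
            · rw [harg2, if_pos hA0]; push_cast; have := hmem.1; linarith
            · rw [harg2, if_pos hA0]; push_cast; linarith
            · simp [mSpiral, h1, h2, h3]
        · -- m = 0 : p > 0
          have h0 : 1 ≤ X + Y ∧ Y < X := by
            rcases not_and_or.1 h1 with h | h <;> rcases not_and_or.1 h2 with h' | h' <;>
              rcases not_and_or.1 h3 with h'' | h'' <;> omega
          have hXYr : (1:ℝ) ≤ (X:ℝ) + (Y:ℝ) := by exact_mod_cast h0.1
          have hYXr : (Y:ℝ) < (X:ℝ) := by exact_mod_cast h0.2
          have hqp : q < p := by rw [hpdef, hqdef]; linarith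
          have hqp2 : -q ≤ p := by rw [hpdef, hqdef]; linarith
          have hp : 0 < p := by linarith
          have hmem := arg_mem_pos (q := q) hp
          rcases lt_trichotomy q 0 with hq | hq | hq
          · have hA0 : Complex.arg ⟨p, q⟩ < 0 := Complex.arg_neg_iff.2 (by simpa using hq)
            have low : -(π/4) ≤ Complex.arg ⟨p, q⟩ := (c_pos_ge_neg hp).2 (by linarith)
            refine ⟨4, ?_, ?_, ?_⟩
            · rw [harg2, if_pos hA0]; push_cast; linarith
            · rw [harg2, if_pos hA0]; push_cast; have := hmem.2; linarith
            · simp [mSpiral, h1, h2, h3]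
          · exfalso
            have : (2*Y : ℝ) = 1 := by rw [hqdef] at hq; linarith
            have : (2*Y : ℤ) = 1 := by exact_mod_cast this
            omega
          · have hA0 : 0 ≤ Complex.arg ⟨p, q⟩ := Complex.arg_nonneg_iff.2 (by simpa using hq.le)
            have high : Complex.arg ⟨p, q⟩ < π/4 := by
              by_contra h
              push_neg at h
              exact absurd ((c_pos_ge hp).1 h) (by linarith)
            refine ⟨0, ?_, ?_, ?_⟩
            · rw [harg2, if_neg (not_lt.2 hA0)]; push_cast; linarith
            · rw [harg2, if_neg (not_lt.2 hA0)]; push_cast; linarith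
            · simp [mSpiral, h1, h2, h3]
  obtain ⟨n, hl, hh, hm⟩ := main
  have hfl : ⌊(1:ℝ)/2 + 2/π * arg2 ⟨p,q⟩⌋ = n := floor_formula _ n hl hh
  show ((⌊(1 : ℝ) / 2 + (2 / Real.pi) * arg2 ⟨(X:ℝ) - 1 / 2, (Y:ℝ) - 1 / 2⟩⌋).toNat + 3) % 4
      = (mSpiral (X,Y) + 3) % 4
  rw [hz]
  rw [show (2 / Real.pi) * arg2 ⟨p,q⟩ = 2/π * arg2 ⟨p,q⟩ from rfl, hfl]
  simp only [Int.toNat_natCast]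
  omega


namespace SpiralAux

def prevZ2 (v : ℤ × ℤ) (j : ℕ) : ℤ × ℤ :=
  match j % 4 with
  | 0 => (v.1, v.2 - 1)
  | 1 => (v.1 + 1, v.2)
  | 2 => (v.1, v.2 + 1)
  | _ => (v.1 - 1, v.2)

lemma prev_of_succ {w v : ℤ × ℤ} {j : ℕ} (hj : j < 4) (h : succZ2 w j = v) :
    w = prevZ2 v j := by
  interval_cases j <;>
    (simp only [succZ2, prevZ2, Prod.ext_iff] at h ⊢) <;>
    obtain ⟨h1, h2⟩ := h <;> constructor <;> omega

lemma inB_mono {k k' : ℕ} (h : k ≤ k') {v : ℤ × ℤ} (hv : inB k v) : inB k' v := by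
  unfold inB at *; omega

lemma inB_step {k : ℕ} (hk : 1 ≤ k) {v : ℤ × ℤ} (h : inB (k-1) v) (j : ℕ) :
    inB k (succZ2 v j) := by
  have h4 : j % 4 = 0 ∨ j % 4 = 1 ∨ j % 4 = 2 ∨ j % 4 = 3 := by omega
  rcases h4 with e | e | e | e <;> (unfold succZ2; rw [e]) <;> (unfold inB at *; simp only) <;> omega

lemma filter_sub2 {P : ℕ → Prop} (a b : ℕ) (ha : ¬ P a) (hb : ¬ P b) :
    ((Finset.range 4).filter fun j => P j) ⊆
      ((Finset.range 4).filter fun j => j ≠ a ∧ j ≠ b) := by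
  intro j hj
  simp only [Finset.mem_filter, Finset.mem_range] at hj ⊢
  exact ⟨hj.1, fun e => ha (e ▸ hj.2), fun e => hb (e ▸ hj.2)⟩

lemma filter_sub1 {P : ℕ → Prop} (a : ℕ) (ha : ¬ P a) :
    ((Finset.range 4).filter fun j => P j) ⊆
      ((Finset.range 4).filter fun j => j ≠ a) := by
  intro j hj
  simp only [Finset.mem_filter, Finset.mem_range] at hj ⊢
  exact ⟨hj.1, fun e => ha (e ▸ hj.2)⟩

end SpiralAux

namespace SpiralAux

lemma geo' (k : ℕ) (v : ℤ × ℤ) (n : ℕ) (hk : 1 ≤ k) (hv : inB k v) (hn : 1 ≤ n)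
    (hexit : ¬ inB k (succZ2 v (((mSpiral v + 3) % 4 + n) % 4)))
    (hcard : n ≤ ((Finset.range 4).filter fun j => inB k (prevZ2 v j)).card) : False := by
  obtain ⟨X, Y⟩ := v
  set j := ((mSpiral (X, Y) + 3) % 4 + n) % 4 with hjdef
  have hj4 : j = 0 ∨ j = 1 ∨ j = 2 ∨ j = 3 := by omega
  obtain ⟨hv1, hv2, hv3, hv4⟩ := hv
  simp only at hv1 hv2 hv3 hv4
  have hc3 : ((Finset.range 4).filter fun j' => j' ≠ 2).card = 3 := by decide
  have hc3a : ((Finset.range 4).filter fun j' => j' ≠ 0).card = 3 := by decide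
  have hc3b : ((Finset.range 4).filter fun j' => j' ≠ 1).card = 3 := by decide
  have hc3c : ((Finset.range 4).filter fun j' => j' ≠ 3).card = 3 := by decide
  have hc2a : ((Finset.range 4).filter fun j' => j' ≠ 2 ∧ j' ≠ 3).card = 2 := by decide
  have hc2b : ((Finset.range 4).filter fun j' => j' ≠ 3 ∧ j' ≠ 0).card = 2 := by decide
  have hc2c : ((Finset.range 4).filter fun j' => j' ≠ 0 ∧ j' ≠ 1).card = 2 := by decide
  have hc2d : ((Finset.range 4).filter fun j' => j' ≠ 1 ∧ j' ≠ 2).card = 2 := by decide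
  rcases hj4 with hj | hj | hj | hj
  · -- North exit : Y = k
    rw [hj] at hexit
    simp only [succZ2, inB, not_and, not_lt, not_le] at hexit
    have hY : Y = k := by
      have := hexit hv1 hv2 (by omega); omega
    by_cases hcor : X = -(k:ℤ) + 1
    · -- NW corner, m = 2
      have hm : mSpiral (X, Y) = 2 := by unfold mSpiral; split_ifs <;> omega
      rw [hm] at hjdef
      have hn3 : 3 ≤ n := by omega
      have e1 : ¬ inB k (prevZ2 (X, Y) 2) := by simp only [prevZ2, inB]; omega
      have e2 : ¬ inB k (prevZ2 (X, Y) 3) := by simp only [prevZ2, inB]; omega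
      have := le_trans hcard (le_trans (Finset.card_le_card (filter_sub2 2 3 e1 e2)) hc2a.le)
      omega
    · -- north side (incl. NE corner), m = 1
      have hm : mSpiral (X, Y) = 1 := by unfold mSpiral; split_ifs <;> omega
      rw [hm] at hjdef
      have hn4 : 4 ≤ n := by omega
      have e1 : ¬ inB k (prevZ2 (X, Y) 2) := by simp only [prevZ2, inB]; omega
      have := le_trans hcard (le_trans (Finset.card_le_card (filter_sub1 2 e1)) hc3.le)
      omega
  · -- West exit : X = -k+1
    rw [hj] at hexit
    simp only [succZ2, inB, not_and, not_lt, not_le] at hexit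
    have hX : X = -(k:ℤ) + 1 := by
      by_contra h
      have := hexit (by omega) (by omega) (by omega); omega
    by_cases hcor : Y = -(k:ℤ) + 1
    · -- SW corner, m = 3
      have hm : mSpiral (X, Y) = 3 := by unfold mSpiral; split_ifs <;> omega
      rw [hm] at hjdef
      have hn3 : 3 ≤ n := by omega
      have e1 : ¬ inB k (prevZ2 (X, Y) 3) := by simp only [prevZ2, inB]; omega
      have e2 : ¬ inB k (prevZ2 (X, Y) 0) := by simp only [prevZ2, inB]; omega
      have := le_trans hcard (le_trans (Finset.card_le_card (filter_sub2 3 0 e1 e2)) hc2b.le)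
      omega
    · -- west side, m = 2
      have hm : mSpiral (X, Y) = 2 := by unfold mSpiral; split_ifs <;> omega
      rw [hm] at hjdef
      have hn4 : 4 ≤ n := by omega
      have e1 : ¬ inB k (prevZ2 (X, Y) 3) := by simp only [prevZ2, inB]; omega
      have := le_trans hcard (le_trans (Finset.card_le_card (filter_sub1 3 e1)) hc3c.le)
      omega
  · -- South exit : Y = -k+1
    rw [hj] at hexit
    simp only [succZ2, inB, not_and, not_lt, not_le] at hexit
    have hY : Y = -(k:ℤ) + 1 := by
      by_contra h
      have := hexit hv1 hv2 (by omega); omega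
    by_cases hcor : X = (k:ℤ)
    · -- SE corner, m = 0
      have hm : mSpiral (X, Y) = 0 := by unfold mSpiral; split_ifs <;> omega
      rw [hm] at hjdef
      have hn3 : 3 ≤ n := by omega
      have e1 : ¬ inB k (prevZ2 (X, Y) 0) := by simp only [prevZ2, inB]; omega
      have e2 : ¬ inB k (prevZ2 (X, Y) 1) := by simp only [prevZ2, inB]; omega
      have := le_trans hcard (le_trans (Finset.card_le_card (filter_sub2 0 1 e1 e2)) hc2c.le)
      omega
    · -- south side, m = 3
      have hm : mSpiral (X, Y) = 3 := by unfold mSpiral; split_ifs <;> omega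
      rw [hm] at hjdef
      have hn4 : 4 ≤ n := by omega
      have e1 : ¬ inB k (prevZ2 (X, Y) 0) := by simp only [prevZ2, inB]; omega
      have := le_trans hcard (le_trans (Finset.card_le_card (filter_sub1 0 e1)) hc3a.le)
      omega
  · -- East exit : X = k
    rw [hj] at hexit
    simp only [succZ2, inB, not_and, not_lt, not_le] at hexit
    have hX : X = (k:ℤ) := by
      by_contra h
      have := hexit (by omega) (by omega) (by omega); omega
    by_cases hcor : Y = (k:ℤ)
    · -- NE corner, m = 1
      have hm : mSpiral (X, Y) = 1 := by unfold mSpiral; split_ifs <;> omega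
      rw [hm] at hjdef
      have hn3 : 3 ≤ n := by omega
      have e1 : ¬ inB k (prevZ2 (X, Y) 1) := by simp only [prevZ2, inB]; omega
      have e2 : ¬ inB k (prevZ2 (X, Y) 2) := by simp only [prevZ2, inB]; omega
      have := le_trans hcard (le_trans (Finset.card_le_card (filter_sub2 1 2 e1 e2)) hc2d.le)
      omega
    · -- east side, m = 0
      have hm : mSpiral (X, Y) = 0 := by unfold mSpiral; split_ifs <;> omega
      rw [hm] at hjdef
      have hn4 : 4 ≤ n := by omega
      have e1 : ¬ inB k (prevZ2 (X, Y) 1) := by simp only [prevZ2, inB]; omega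
      have := le_trans hcard (le_trans (Finset.card_le_card (filter_sub1 1 e1)) hc3b.le)
      omega

end SpiralAux


namespace SpiralAux

noncomputable def cnt (x : ℕ → ℤ × ℤ) (v : ℤ × ℤ) (s t : ℕ) : ℕ :=
  ((Finset.Ico s t).filter fun p => x p = v).card

variable {a b c : ℤ × ℤ} {x : ℕ → ℤ × ℤ} {r : ℕ → ℤ × ℤ → ℕ}

lemma rotor_lt (hw : IsRotorWalk (dMod b c) (succMod a b c) x r) :
    ∀ t v, r t v < dMod b c v := by
  intro t
  induction t with
  | zero => exact hw.1
  | succ t ih =>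
    intro v
    by_cases h : v = x t
    · subst h
      rw [hw.2.1 t]
      exact Nat.mod_lt _ (by unfold dMod; split <;> omega)
    · rw [hw.2.2.1 t v h]; exact ih v

lemma cnt_split (v : ℤ × ℤ) {s m t : ℕ} (h1 : s ≤ m) (h2 : m ≤ t) :
    cnt x v s t = cnt x v s m + cnt x v m t := by
  unfold cnt
  rw [← Finset.Ico_union_Ico_eq_Ico h1 h2, Finset.filter_union,
    Finset.card_union_of_disjoint
      (Finset.disjoint_filter_filter (Finset.Ico_disjoint_Ico_consecutive s m t))]

lemma cnt_succ (v : ℤ × ℤ) (t : ℕ) :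
    cnt x v t (t+1) = if x t = v then 1 else 0 := by
  unfold cnt
  have : Finset.Ico t (t+1) = {t} := by
    ext s; simp only [Finset.mem_Ico, Finset.mem_singleton]; omega
  rw [this, Finset.filter_singleton]
  split_ifs <;> simp

lemma rotor_evol (hw : IsRotorWalk (dMod b c) (succMod a b c) x r) (v : ℤ × ℤ)
    {s t : ℕ} (h : s ≤ t) : r t v = (r s v + cnt x v s t) % dMod b c v := by
  induction t with
  | zero =>
    have hs : s = 0 := by omega
    subst hs
    unfold cnt
    rw [Finset.Ico_self]
    simp [Nat.mod_eq_of_lt (rotor_lt hw 0 v)]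
  | succ t ih =>
    rcases Nat.lt_or_ge s (t+1) with hst | hst
    · have hst' : s ≤ t := by omega
      rw [cnt_split v hst' (by omega : t ≤ t + 1), cnt_succ]
      by_cases h' : x t = v
      · have e : r (t+1) v = (r t v + 1) % dMod b c v := by rw [← h']; exact hw.2.1 t
        rw [e, ih hst', if_pos h', Nat.mod_add_mod, ← Nat.add_assoc]
      · have e : r (t+1) v = r t v := hw.2.2.1 t v (fun e => h' e.symm)
        rw [e, ih hst', if_neg h', Nat.add_zero]
    · have hs : s = t + 1 := by omega
      subst hs
      unfold cnt
      rw [Finset.Ico_self]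
      simp [Nat.mod_eq_of_lt (rotor_lt hw (t+1) v)]

lemma arrival (hw : IsRotorWalk (dMod b c) (succMod a b c) x r)
    {v : ℤ × ℤ} (hva : v ≠ a) {s : ℕ} (hs : 0 < s) (hxs : x s = v) :
    x (s-1) = prevZ2 v (r s (x (s-1))) ∧ r s (x (s-1)) < 4 := by
  have hstep : x s = succMod a b c (x (s-1)) (r s (x (s-1))) := by
    have h := hw.2.2.2 (s-1)
    rwa [show s - 1 + 1 = s by omega] at h
  have hbc : ¬ (x (s-1) = b ∨ x (s-1) = c) := by
    intro h
    rw [show succMod a b c (x (s-1)) (r s (x (s-1))) = a by simp [succMod, h]] at hstep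
    exact hva (hxs ▸ hstep ▸ rfl)
  have hlt : r s (x (s-1)) < 4 := by
    have := rotor_lt hw s (x (s-1))
    rwa [show dMod b c (x (s-1)) = 4 by simp [dMod, hbc]] at this
  have hsz : succZ2 (x (s-1)) (r s (x (s-1))) = v := by
    rw [← hxs, hstep]; simp [succMod, hbc]
  exact ⟨prev_of_succ hlt hsz, hlt⟩

/-- The core repeated-arrival lemma. -/
lemma core (hw : IsRotorWalk (dMod b c) (succMod a b c) x r)
    {t0 T s1 s2 : ℕ} (hxt0 : x t0 = a) (hnoA : ∀ s, t0 < s → s < T → x s ≠ a)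
    (h01 : t0 < s1) (h12 : s1 < s2) (h2T : s2 < T)
    (hprev : x (s1 - 1) = x (s2 - 1)) (hrot : r s1 (x (s1 - 1)) = r s2 (x (s2 - 1)))
    (hs2a : x s2 ≠ a) :
    x (s2 - 1) ≠ a ∧ t0 < s2 - 1 ∧ 5 ≤ cnt x (x (s2-1)) (t0+1) s2 := by
  set w := x (s2 - 1) with hwdef
  have hs2pos : 0 < s2 := by omega
  have hstep : x s2 = succMod a b c w (r s2 w) := by
    have h := hw.2.2.2 (s2-1)
    rwa [show s2 - 1 + 1 = s2 by omega] at h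
  have hwbc : ¬ (w = b ∨ w = c) := by
    intro h
    rw [show succMod a b c w (r s2 w) = a by simp [succMod, h]] at hstep
    exact hs2a hstep
  have hd : dMod b c w = 4 := by simp [dMod, hwbc]
  have hev : r s2 w = (r s1 w + cnt x w s1 s2) % 4 := by
    have := rotor_evol hw w h12.le
    rwa [hd] at this
  have hlt : r s1 w < 4 := by
    have := rotor_lt hw s1 w
    rwa [hd] at this
  have hr12 : r s1 w = r s2 w := by rw [hprev] at hrot; exact hrot
  have hmod : cnt x w s1 s2 % 4 = 0 := by omega
  have hone : 1 ≤ cnt x w s1 s2 := by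
    have : s2 - 1 ∈ (Finset.Ico s1 s2).filter fun p => x p = w := by
      simp only [Finset.mem_filter, Finset.mem_Ico]
      exact ⟨⟨by omega, by omega⟩, by trivial⟩
    exact Finset.card_pos.2 ⟨_, this⟩
  have h4 : 4 ≤ cnt x w s1 s2 := by omega
  have hwa : w ≠ a := by
    intro e
    have hz : cnt x w s1 s2 = 0 := by
      unfold cnt
      rw [Finset.card_eq_zero, Finset.filter_eq_empty_iff]
      intro s hs
      simp only [Finset.mem_Ico] at hs
      rw [e]
      exact hnoA s (by omega) (by omega)
    omega
  have h01' : t0 < s1 - 1 := by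
    have hne : s1 - 1 ≠ t0 := by
      intro e
      exact hwa (by rw [← hprev, e, hxt0])
    omega
  refine ⟨hwa, by omega, ?_⟩
  have hsub : insert (s1-1) ((Finset.Ico s1 s2).filter fun p => x p = w)
      ⊆ (Finset.Ico (t0+1) s2).filter fun p => x p = w := by
    intro s hs
    rcases Finset.mem_insert.1 hs with e | hs'
    · subst e
      exact Finset.mem_filter.2 ⟨Finset.mem_Ico.2 ⟨by omega, by omega⟩, hprev⟩
    · simp only [Finset.mem_filter, Finset.mem_Ico] at hs' ⊢
      exact ⟨⟨by omega, hs'.1.2⟩, hs'.2⟩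
  have hcard := Finset.card_le_card hsub
  rw [Finset.card_insert_of_notMem
    (by simp only [Finset.mem_filter, Finset.mem_Ico]; rintro ⟨⟨h, -⟩, -⟩; omega)] at hcard
  unfold cnt at h4 ⊢
  omega

/-- No vertex other than `a` is visited five times between consecutive visits to `a`. -/
lemma visits_le_four (hw : IsRotorWalk (dMod b c) (succMod a b c) x r)
    {t0 T : ℕ} (hxt0 : x t0 = a) (hnoA : ∀ s, t0 < s → s < T → x s ≠ a) :
    ∀ v, v ≠ a → cnt x v (t0+1) T ≤ 4 := by
  have main : ∀ q, t0 < q → q < T → x q ≠ a → cnt x (x q) (t0+1) (q+1) ≤ 4 := by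
    intro q
    induction q using Nat.strong_induction_on with
    | _ q ih =>
      intro hq hqT hqa
      by_contra hbad
      push_neg at hbad
      set S := (Finset.Ico (t0+1) (q+1)).filter (fun p => x p = x q) with hS
      have hmaps : ∀ s ∈ S, r s (x (s-1)) ∈ Finset.range 4 := by
        intro s hs
        simp only [hS, Finset.mem_filter, Finset.mem_Ico] at hs
        exact Finset.mem_range.2 (arrival hw hqa (by omega) hs.2).2
      have hlt45 : (Finset.range 4).card < S.card := by
        rw [Finset.card_range]
        exact lt_of_lt_of_le (by norm_num) hbad
      obtain ⟨u1, hu1, u2, hu2, hne, heq⟩ :=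
        Finset.exists_ne_map_eq_of_card_lt_of_maps_to hlt45 hmaps
      have key : ∀ p1 p2, p1 ∈ S → p2 ∈ S → p1 < p2 →
          r p1 (x (p1-1)) = r p2 (x (p2-1)) → False := by
        intro p1 p2 hp1 hp2 hplt hreq
        simp only [hS, Finset.mem_filter, Finset.mem_Ico] at hp1 hp2
        have harr1 := arrival hw hqa (show 0 < p1 by omega) hp1.2
        have harr2 := arrival hw hqa (show 0 < p2 by omega) hp2.2
        have hprev : x (p1 - 1) = x (p2 - 1) := by
          rw [harr1.1, harr2.1, hreq]
        obtain ⟨hwa, ht0p, h5⟩ := core hw hxt0 hnoA (show t0 < p1 by omega) hplt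
          (show p2 < T by omega) hprev hreq (by rw [hp2.2]; exact hqa)
        have := ih (p2 - 1) (by omega) ht0p (by omega) hwa
        rw [show p2 - 1 + 1 = p2 by omega] at this
        omega
      rcases Nat.lt_or_gt_of_ne hne with h | h
      · exact key u1 u2 hu1 hu2 h heq
      · exact key u2 u1 hu2 hu1 h heq.symm
  intro v hva
  by_contra hbad
  push_neg at hbad
  unfold cnt at hbad
  have hne : ((Finset.Ico (t0+1) T).filter (fun p => x p = v)).Nonempty :=
    Finset.card_pos.1 (by omega)
  set q := ((Finset.Ico (t0+1) T).filter (fun p => x p = v)).max' hne with hq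
  have hqS := Finset.max'_mem _ hne
  rw [← hq] at hqS
  simp only [Finset.mem_filter, Finset.mem_Ico] at hqS
  have hsub : (Finset.Ico (t0+1) T).filter (fun p => x p = v)
      ⊆ (Finset.Ico (t0+1) (q+1)).filter (fun p => x p = v) := by
    intro s hs
    have hsq : s ≤ q := Finset.le_max' _ s hs
    simp only [Finset.mem_filter, Finset.mem_Ico] at hs ⊢
    exact ⟨⟨hs.1.1, by omega⟩, hs.2⟩
  have hm := main q (by omega) hqS.1.2 (by rw [hqS.2]; exact hva)
  rw [hqS.2] at hm
  unfold cnt at hm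
  have hcc := Finset.card_le_card hsub
  omega

end SpiralAux


end LayersProof

/-- Lemma `layers` for the ℤ² rotor walk with the spiral initial configuration. -/
theorem layers_lemma (a b c : ℤ × ℤ) (hbc : b ≠ c) (hab : a ≠ b) (hac : a ≠ c)
    (x : ℕ → ℤ × ℤ) (r : ℕ → ℤ × ℤ → ℕ)
    (hwalk : IsRotorWalk (dMod b c) (succMod a b c) x r)
    (hr0 : ∀ v, r 0 v = rotInit b c v) (hx0 : x 0 = a) :
    (∀ t₁ t₂, t₁ < t₂ → entersNewLayer x t₁ → entersNewLayer x t₂ →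
      ∃ s, t₁ ≤ s ∧ s < t₂ ∧ x s = a) ∧
    (∀ t₁ t₂, t₁ < t₂ → x t₁ = a → x t₂ = a →
      (∀ s, t₁ < s → s < t₂ → x s ≠ a) →
      ∀ v, ((Finset.Ioo t₁ t₂).filter fun s => x s = v).card ≤ 4) := by
  classical
  constructor
  · -- Part 1: between two layer entries the walk visits `a`
    intro t1 t2 hlt h1 h2
    by_contra hno
    push_neg at hno
    obtain ⟨k1, hk1, hpre1, hout1⟩ := h1
    obtain ⟨k2, hk2, hpre2, hout2⟩ := h2
    have ht1pos : 0 < t1 := by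
      rcases Nat.eq_zero_or_pos t1 with e | e
      · exact absurd hx0 (hno 0 (by omega) (by omega))
      · exact e
    -- the last visit to `a` before `t1`
    have hAne : ((Finset.range t1).filter (fun s => x s = a)).Nonempty :=
      ⟨0, by simp [Finset.mem_filter, ht1pos, hx0]⟩
    set t0 := ((Finset.range t1).filter (fun s => x s = a)).max' hAne with ht0def
    have ht0mem := Finset.max'_mem _ hAne
    rw [← ht0def] at ht0mem
    simp only [Finset.mem_filter, Finset.mem_range] at ht0mem
    obtain ⟨ht0lt, ht0a⟩ := ht0mem
    have hnoA : ∀ s, t0 < s → s < t2 → x s ≠ a := by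
      intro s hs1 hs2
      by_cases h : s < t1
      · intro e
        have hmem : s ∈ (Finset.range t1).filter (fun s => x s = a) := by
          simp [Finset.mem_filter, h, e]
        have := Finset.le_max' _ s hmem
        omega
      · exact hno s (by omega) hs2
    have hwin := SpiralAux.visits_le_four hwalk ht0a hnoA
    have hk12 : k1 < k2 := by
      by_contra h
      push_neg at h
      exact hout1 (SpiralAux.inB_mono h (hpre2 t1 hlt))
    have ht2pos : 0 < t2 := by omega
    set v := x (t2 - 1) with hvdef
    have hvB : inB k2 v := hpre2 (t2-1) (by omega)
    have hstep : x t2 = succMod a b c v (r t2 v) := by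
      have h := hwalk.2.2.2 (t2-1)
      rwa [show t2 - 1 + 1 = t2 by omega] at h
    have haB : inB k2 a := by rw [← hx0]; exact hpre2 0 (by omega)
    have hvbc : ¬ (v = b ∨ v = c) := by
      intro h
      apply hout2
      rw [hstep, show succMod a b c v (r t2 v) = a by simp [succMod, h]]
      exact haB
    have hstep' : x t2 = succZ2 v (r t2 v) := by
      rw [hstep]; simp [succMod, hvbc]
    have hvd : dMod b c v = 4 := by simp [dMod, hvbc]
    have hvout : ¬ inB (k2 - 1) v := by
      intro h
      exact hout2 (hstep' ▸ SpiralAux.inB_step hk2 h (r t2 v))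
    have hva : v ≠ a := by
      intro e
      apply hvout
      rw [e, ← hx0]
      exact SpiralAux.inB_mono (by omega) (hpre1 0 ht1pos)
    have hearly : ∀ s, s < t1 → x s ≠ v := by
      intro s hs e
      exact hvout (e ▸ SpiralAux.inB_mono (by omega : k1 ≤ k2 - 1) (hpre1 s hs))
    have hcnt0 : SpiralAux.cnt x v 0 t2 = SpiralAux.cnt x v (t0+1) t2 := by
      rw [SpiralAux.cnt_split v (by omega : 0 ≤ t0+1) (by omega : t0+1 ≤ t2)]
      have hz : SpiralAux.cnt x v 0 (t0+1) = 0 := by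
        unfold SpiralAux.cnt
        rw [Finset.card_eq_zero, Finset.filter_eq_empty_iff]
        intro s hs
        simp only [Finset.mem_Ico] at hs
        exact hearly s (by omega)
      omega
    have hrot : r t2 v = (spiralRotor v + SpiralAux.cnt x v 0 t2) % 4 := by
      have h := SpiralAux.rotor_evol hwalk v (Nat.zero_le t2)
      rw [hvd] at h
      rw [h, hr0 v, show rotInit b c v = spiralRotor v by simp [rotInit, hvbc]]
    have hn1 : 1 ≤ SpiralAux.cnt x v (t0+1) t2 := by
      have hmem : t2 - 1 ∈ (Finset.Ico (t0+1) t2).filter (fun p => x p = v) := by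
        simp only [Finset.mem_filter, Finset.mem_Ico]
        exact ⟨⟨by omega, by omega⟩, by trivial⟩
      exact Finset.card_pos.2 ⟨_, hmem⟩
    have hinj : SpiralAux.cnt x v (t0+1) t2
        ≤ ((Finset.range 4).filter fun j => inB k2 (SpiralAux.prevZ2 v j)).card := by
      apply Finset.card_le_card_of_injOn (fun s => r s (x (s-1)))
      · intro s hs
        simp only [Finset.mem_coe, Finset.mem_filter, Finset.mem_Ico] at hs
        obtain ⟨⟨hs1, hs2⟩, hsv⟩ := hs
        obtain ⟨hprev, hlt4⟩ := SpiralAux.arrival hwalk hva (by omega) hsv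
        simp only [Finset.mem_coe, Finset.mem_filter, Finset.mem_range]
        refine ⟨hlt4, ?_⟩
        rw [← hprev]
        exact hpre2 (s-1) (by omega)
      · intro s1 h1 s2 h2 heq
        by_contra hne
        have key : ∀ p1 p2, p1 ∈ (Finset.Ico (t0+1) t2).filter (fun p => x p = v) →
            p2 ∈ (Finset.Ico (t0+1) t2).filter (fun p => x p = v) → p1 < p2 →
            r p1 (x (p1-1)) = r p2 (x (p2-1)) → False := by
          intro p1 p2 hp1 hp2 hplt hreq
          simp only [Finset.mem_filter, Finset.mem_Ico] at hp1 hp2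
          have harr1 := SpiralAux.arrival hwalk hva (show 0 < p1 by omega) hp1.2
          have harr2 := SpiralAux.arrival hwalk hva (show 0 < p2 by omega) hp2.2
          have hprev : x (p1 - 1) = x (p2 - 1) := by
            rw [harr1.1, harr2.1, hreq]
          obtain ⟨hwa, ht0p, h5⟩ := SpiralAux.core hwalk ht0a hnoA
            (show t0 < p1 by omega) hplt (show p2 < t2 by omega) hprev hreq
            (by rw [hp2.2]; exact hva)
          have hmono : SpiralAux.cnt x (x (p2-1)) (t0+1) p2
              ≤ SpiralAux.cnt x (x (p2-1)) (t0+1) t2 := by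
            rw [SpiralAux.cnt_split (x (p2-1)) (by omega : t0+1 ≤ p2) (by omega : p2 ≤ t2)]
            omega
          have := hwin (x (p2-1)) hwa
          omega
        rcases Nat.lt_or_gt_of_ne hne with h | h
        · exact key s1 s2 (Finset.mem_coe.1 h1) (Finset.mem_coe.1 h2) h heq
        · exact key s2 s1 (Finset.mem_coe.1 h2) (Finset.mem_coe.1 h1) h heq.symm
    have hexit : ¬ inB k2 (succZ2 v ((spiralRotor v + SpiralAux.cnt x v (t0+1) t2) % 4)) := by
      rw [← hcnt0, ← hrot, ← hstep']
      exact hout2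
    rw [spiralRotor_eq] at hexit
    exact SpiralAux.geo' k2 v (SpiralAux.cnt x v (t0+1) t2) hk2 hvB hn1 hexit hinj
  · -- Part 2: between consecutive visits to `a` every vertex is visited at most 4 times
    intro t1 t2 hlt ha1 ha2 hno v
    by_cases hv : v = a
    · subst hv
      have : (Finset.Ioo t1 t2).filter (fun s => x s = v) = ∅ := by
        rw [Finset.filter_eq_empty_iff]
        intro s hs
        simp only [Finset.mem_Ioo] at hs
        exact hno s hs.1 hs.2
      simp [this]
    · have h := SpiralAux.visits_le_four hwalk ha1 hno v hv
      unfold SpiralAux.cnt at h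
      rwa [Finset.Ico_add_one_left_eq_Ioo] at h
end

section
/- Given p_1,...,p_n in (0,1] with p_1+...+p_n = 1, there exists a sequence z_1, z_2, ... with values in {1,...,n} such that for all i in {1,...,n} and all t >= 1, | p_i t - #{s <= t : z_s = i} | <= 1. -/
open scoped BigOperators Classical

noncomputable def elig {n : ℕ} (p : Fin n → ℝ) (t : ℕ) (v : Fin n → ℕ) : Finset (Fin n) :=
  Finset.univ.filter fun i => (v i : ℝ) ≤ p i * t

noncomputable def pick {n : ℕ} (p : Fin n → ℝ) (hn : 0 < n) (t : ℕ) (v : Fin n → ℕ) : Fin n :=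
  if h : (elig p t v).Nonempty then
    Classical.choose (Finset.exists_min_image (elig p t v) (fun i => ((v i : ℝ) + 1) / p i) h)
  else ⟨0, hn⟩

noncomputable def cnt {n : ℕ} (p : Fin n → ℝ) (hn : 0 < n) : ℕ → Fin n → ℕ
  | 0 => fun _ => 0
  | (t+1) => fun i => cnt p hn t i + if pick p hn (t+1) (cnt p hn t) = i then 1 else 0

theorem pick_spec {n : ℕ} (p : Fin n → ℝ) (hn : 0 < n) (t : ℕ) (v : Fin n → ℕ)
    (h : (elig p t v).Nonempty) :
    pick p hn t v ∈ elig p t v ∧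
      ∀ i ∈ elig p t v, ((v (pick p hn t v) : ℝ) + 1) / p (pick p hn t v) ≤ ((v i : ℝ) + 1) / p i := by
  have hs := Classical.choose_spec
    (Finset.exists_min_image (elig p t v) (fun i => ((v i : ℝ) + 1) / p i) h)
  rw [pick, dif_pos h]
  exact ⟨hs.1, hs.2⟩

/-- **Low-discrepancy sequence** (Proposition `seq`). -/
theorem low_discrepancy_sequence (n : ℕ) (hn : 0 < n) (p : Fin n → ℝ)
    (hp : ∀ i, 0 < p i ∧ p i ≤ 1) (hsum : ∑ i, p i = 1) :
    ∃ z : ℕ → Fin n, ∀ (i : Fin n) (t : ℕ), 1 ≤ t →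
      |p i * (t : ℝ) - (((Finset.Icc 1 t).filter fun s => z s = i).card : ℝ)| ≤ 1 := by
  classical
  have hp0 : ∀ i, 0 < p i := fun i => (hp i).1
  haveI : Nonempty (Fin n) := Fin.pos_iff_nonempty.mp hn
  set z : ℕ → Fin n := fun t => pick p hn t (cnt p hn (t-1)) with hz
  have hcnt : ∀ t i, cnt p hn (t+1) i = cnt p hn t i + if z (t+1) = i then 1 else 0 := by
    intro t i; rfl
  have hsumc : ∀ t, ∑ i, cnt p hn t i = t := by
    intro t; induction t with
    | zero => simp [cnt]
    | succ t ih =>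
      simp only [hcnt, Finset.sum_add_distrib, ih]
      simp
  have heligne : ∀ t, (elig p (t+1) (cnt p hn t)).Nonempty := by
    intro t
    by_contra h
    rw [Finset.not_nonempty_iff_eq_empty, elig, Finset.filter_eq_empty_iff] at h
    have h1 : ∀ i ∈ Finset.univ, p i * ((t+1 : ℕ) : ℝ) < (cnt p hn t i : ℝ) := by
      intro i _
      have := h (Finset.mem_univ i)
      push_neg at this
      exact this
    have h2 : ∑ i, p i * ((t+1:ℕ) : ℝ) < ∑ i, (cnt p hn t i : ℝ) :=
      Finset.sum_lt_sum_of_nonempty Finset.univ_nonempty h1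
    rw [← Finset.sum_mul, hsum, one_mul] at h2
    rw [← Nat.cast_sum, hsumc t] at h2
    push_cast at h2
    linarith
  have hmono : ∀ s t, s ≤ t → ∀ i, cnt p hn s i ≤ cnt p hn t i := by
    intro s t hst i
    induction t with
    | zero => interval_cases s; exact le_rfl
    | succ t ih =>
      rcases Nat.lt_or_ge s (t+1) with h | h
      · calc cnt p hn s i ≤ cnt p hn t i := ih (by omega)
          _ ≤ cnt p hn (t+1) i := by rw [hcnt]; exact Nat.le_add_right _ _
      · have : s = t + 1 := by omega
        subst this; exact le_rfl
  have hinc : ∀ s : ℕ, 1 ≤ s → cnt p hn s (z s) = cnt p hn (s-1) (z s) + 1 := by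
    intro s hs
    obtain ⟨u, rfl⟩ : ∃ u, s = u + 1 := ⟨s-1, by omega⟩
    simp only [Nat.add_sub_cancel]
    rw [hcnt]
    simp [hz]
  have hcard : ∀ t i, ((Finset.Icc 1 t).filter fun s => z s = i).card = cnt p hn t i := by
    intro t i
    induction t with
    | zero => simp [cnt]
    | succ t ih =>
      have hins : Finset.Icc 1 (t+1) = insert (t+1) (Finset.Icc 1 t) := by
        ext x
        simp only [Finset.mem_Icc, Finset.mem_insert]
        omega
      have hnm : (t+1) ∉ (Finset.Icc 1 t).filter fun s => z s = i := by
        intro hmem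
        have := (Finset.mem_filter.mp hmem).1
        simp [Finset.mem_Icc] at this
      rw [hins, Finset.filter_insert, hcnt, ← ih]
      by_cases hzi : z (t+1) = i
      · rw [if_pos hzi, if_pos hzi, Finset.card_insert_of_notMem hnm]
      · rw [if_neg hzi, if_neg hzi]; ring
  have hupper : ∀ t i, (cnt p hn t i : ℝ) ≤ p i * t + 1 := by
    intro t i
    induction t with
    | zero => simp [cnt]
    | succ t ih =>
      rw [hcnt]
      by_cases hzi : z (t+1) = i
      · rw [if_pos hzi]
        have hmem := (pick_spec p hn (t+1) (cnt p hn t) (heligne t)).1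
        rw [elig, Finset.mem_filter] at hmem
        have hzp : z (t+1) = pick p hn (t+1) (cnt p hn t) := rfl
        rw [← hzp, hzi] at hmem
        have h2 := hmem.2
        push_cast at h2 ⊢
        linarith
      · rw [if_neg hzi]
        have := (hp0 i).le
        push_cast
        nlinarith
  have hlower : ∀ t i, p i * t - 1 ≤ (cnt p hn t i : ℝ) := by
    by_contra hcon
    push_neg at hcon
    obtain ⟨T, j, hj⟩ := hcon
    obtain ⟨a, haT, hkeya, hnotA⟩ :
        ∃ a, a ≤ T ∧
          (1 ≤ a → p (z a) * T ≤ (cnt p hn (a-1) (z a) : ℝ) + 1) ∧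
          (∀ s, a < s → s ≤ T → (cnt p hn (s-1) (z s) : ℝ) + 1 < p (z s) * T) := by
      classical
      set A : Finset ℕ := (Finset.Icc 1 T).filter
        (fun s => p (z s) * T ≤ (cnt p hn (s-1) (z s) : ℝ) + 1) with hA
      by_cases hAne : A.Nonempty
      · refine ⟨A.max' hAne, ?_, fun _ => ?_, fun s hs1 hs2 => ?_⟩
        · exact (Finset.mem_Icc.mp (Finset.mem_filter.mp (A.max'_mem hAne)).1).2
        · exact (Finset.mem_filter.mp (A.max'_mem hAne)).2
        · by_contra hcc
          push_neg at hcc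
          have hsA : s ∈ A := Finset.mem_filter.mpr ⟨Finset.mem_Icc.mpr ⟨by omega, hs2⟩, hcc⟩
          have := A.le_max' s hsA
          omega
      · refine ⟨0, Nat.zero_le _, fun h => absurd h (by omega), fun s hs1 hs2 => ?_⟩
        by_contra hcc
        push_neg at hcc
        exact hAne ⟨s, Finset.mem_filter.mpr ⟨Finset.mem_Icc.mpr ⟨by omega, hs2⟩, hcc⟩⟩
    have hexch : ∀ (i : Fin n) (m : ℕ), 1 ≤ a → cnt p hn (a-1) i ≤ m →
        ((m:ℝ) + 1 < p i * T) → ¬ ((m:ℝ) ≤ p i * a) := by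
      intro i m ha1 hm hmT hma
      have hkey := hkeya ha1
      obtain ⟨b, rfl⟩ : ∃ b, a = b + 1 := ⟨a - 1, by omega⟩
      simp only [Nat.add_sub_cancel] at hkey hm
      have hielig : i ∈ elig p (b+1) (cnt p hn b) := by
        rw [elig, Finset.mem_filter]
        refine ⟨Finset.mem_univ _, ?_⟩
        have h1 : (cnt p hn b i : ℝ) ≤ (m : ℝ) := by exact_mod_cast hm
        calc (cnt p hn b i : ℝ) ≤ (m:ℝ) := h1
          _ ≤ p i * ((b+1:ℕ):ℝ) := by exact_mod_cast hma
      have hps := pick_spec p hn (b+1) (cnt p hn b) (heligne b)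
      have hza : z (b+1) = pick p hn (b+1) (cnt p hn b) := rfl
      have hmin := hps.2 i hielig
      rw [← hza] at hmin
      have hL : (T:ℝ) ≤ ((cnt p hn b (z (b+1)) : ℝ) + 1) / p (z (b+1)) := by
        rw [le_div_iff₀ (hp0 _)]
        linarith [mul_comm (T:ℝ) (p (z (b+1)))]
      have hR : ((cnt p hn b i : ℝ) + 1) / p i < (T:ℝ) := by
        rw [div_lt_iff₀ (hp0 i)]
        have h1 : (cnt p hn b i : ℝ) ≤ (m:ℝ) := by exact_mod_cast hm
        linarith [mul_comm (T:ℝ) (p i)]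
      linarith
    have hrel : ∀ s, a < s → s ≤ T → 1 ≤ a → p (z s) * a < (cnt p hn (s-1) (z s) : ℝ) := by
      intro s hs1 hs2 ha1
      by_contra hcc
      push_neg at hcc
      exact hexch (z s) (cnt p hn (s-1) (z s)) ha1 (hmono (a-1) (s-1) (by omega) _)
        (hnotA s hs1 hs2) hcc
    have hjT : (cnt p hn T j : ℝ) + 1 < p j * T := by linarith
    have hrelj : 1 ≤ a → p j * a < (cnt p hn T j : ℝ) := by
      intro ha1
      by_contra hcc
      push_neg at hcc
      exact hexch j (cnt p hn T j) ha1 (hmono (a-1) T (by omega) j) hjT hcc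
    set F : Finset (Fin n × ℕ) :=
      insert (j, cnt p hn T j) ((Finset.Ioc a T).image fun s => (z s, cnt p hn (s-1) (z s)))
      with hF
    have hinjkey : ∀ s1 s2, s1 ∈ Finset.Ioc a T → s2 ∈ Finset.Ioc a T → s1 < s2 →
        (z s1, cnt p hn (s1-1) (z s1)) ≠ (z s2, cnt p hn (s2-1) (z s2)) := by
      intro s1 s2 h1 h2 hlt heq
      rw [Prod.mk.injEq] at heq
      obtain ⟨hz12, hc12⟩ := heq
      rw [Finset.mem_Ioc] at h1 h2
      have e1 : cnt p hn s1 (z s1) = cnt p hn (s1-1) (z s1) + 1 := hinc s1 (by omega)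
      have e2 : cnt p hn s1 (z s1) ≤ cnt p hn (s2-1) (z s1) := hmono s1 (s2-1) (by omega) _
      rw [hz12] at e1 e2 hc12
      omega
    have hinj : Set.InjOn (fun s => (z s, cnt p hn (s-1) (z s))) (Finset.Ioc a T) := by
      intro s1 h1 s2 h2 heq
      by_contra hne
      rcases lt_trichotomy s1 s2 with h | h | h
      · exact hinjkey s1 s2 (by exact_mod_cast h1) (by exact_mod_cast h2) h heq
      · exact hne h
      · exact hinjkey s2 s1 (by exact_mod_cast h2) (by exact_mod_cast h1) h heq.symm
    have hjnot : (j, cnt p hn T j) ∉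
        (Finset.Ioc a T).image fun s => (z s, cnt p hn (s-1) (z s)) := by
      rw [Finset.mem_image]
      rintro ⟨s, hs, heq⟩
      rw [Finset.mem_Ioc] at hs
      rw [Prod.mk.injEq] at heq
      obtain ⟨hz1, hc1⟩ := heq
      have e1 := hinc s (by omega)
      have e2 := hmono s T hs.2 (z s)
      rw [hz1] at e1 e2 hc1
      omega
    have hcardF : F.card = (T - a) + 1 := by
      rw [hF, Finset.card_insert_of_notMem hjnot, Finset.card_image_of_injOn hinj,
        Nat.card_Ioc]
    have hmemF : ∀ q ∈ F, ((q.2:ℝ) < p q.1 * T - 1) ∧ (1 ≤ a → p q.1 * a < (q.2:ℝ)) := by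
      intro q hq
      rw [hF, Finset.mem_insert] at hq
      rcases hq with rfl | hq
      · exact ⟨by simpa using hj, fun h1 => hrelj h1⟩
      · rw [Finset.mem_image] at hq
        obtain ⟨s, hs, rfl⟩ := hq
        have hs' := Finset.mem_Ioc.mp hs
        exact ⟨by linarith [hnotA s hs'.1 hs'.2], fun h1 => hrel s hs'.1 hs'.2 h1⟩
    have hfiber : ∀ i : Fin n, ((F.filter fun q => q.1 = i).card : ℝ) ≤ p i * ((T:ℝ) - a) := by
      intro i
      have hTa : (a:ℝ) ≤ (T:ℝ) := by exact_mod_cast haT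
      set S : Finset ℕ := (F.filter fun q => q.1 = i).image Prod.snd with hS
      have hScard : S.card = (F.filter fun q => q.1 = i).card := by
        apply Finset.card_image_of_injOn
        intro q1 h1 q2 h2 hq
        have e1 : q1.1 = i := (Finset.mem_filter.mp (Finset.mem_coe.mp h1)).2
        have e2 : q2.1 = i := (Finset.mem_filter.mp (Finset.mem_coe.mp h2)).2
        exact Prod.ext (e1.trans e2.symm) hq
      rcases S.eq_empty_or_nonempty with hSe | hSne
      · rw [← hScard, hSe]
        simp only [Finset.card_empty, Nat.cast_zero]
        have := (hp0 i).le
        nlinarith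
      · have hbound : ∀ m ∈ S, ((m:ℝ) < p i * T - 1) ∧ (1 ≤ a → p i * a < (m:ℝ)) := by
          intro m hm
          rw [hS, Finset.mem_image] at hm
          obtain ⟨q, hqf, rfl⟩ := hm
          have h1 := Finset.mem_filter.mp hqf
          have h2 := hmemF q h1.1
          rw [h1.2] at h2
          exact h2
        have hmax := S.max'_mem hSne
        have hmin := S.min'_mem hSne
        have hminmax : S.min' hSne ≤ S.max' hSne := S.min'_le _ hmax
        have hsub : S ⊆ Finset.Icc (S.min' hSne) (S.max' hSne) := by
          intro m hm
          rw [Finset.mem_Icc]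
          exact ⟨S.min'_le m hm, S.le_max' m hm⟩
        have hc1 : S.card ≤ S.max' hSne + 1 - S.min' hSne := by
          have := Finset.card_le_card hsub
          rwa [Nat.card_Icc] at this
        have hcR : (S.card : ℝ) ≤ (S.max' hSne : ℝ) - (S.min' hSne : ℝ) + 1 := by
          have h2 : ((S.max' hSne + 1 - S.min' hSne : ℕ) : ℝ)
              = (S.max' hSne : ℝ) + 1 - (S.min' hSne : ℝ) := by
            have : S.min' hSne ≤ S.max' hSne + 1 := by omega
            push_cast [this]
            ring
          have h3 : (S.card : ℝ) ≤ ((S.max' hSne + 1 - S.min' hSne : ℕ) : ℝ) := by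
            exact_mod_cast hc1
          linarith
        have hmaxB := (hbound _ hmax).1
        rw [← hScard]
        rcases Nat.eq_zero_or_pos a with ha0 | ha1
        · have h0 : (0:ℝ) ≤ (S.min' hSne : ℝ) := Nat.cast_nonneg _
          rw [ha0]
          push_cast
          linarith
        · have hminB := (hbound _ hmin).2 ha1
          linarith
    have hsplit : F.card = ∑ i, (F.filter fun q => q.1 = i).card :=
      Finset.card_eq_sum_card_fiberwise (fun q _ => Finset.mem_univ q.1)
    have e1 : (F.card : ℝ) = (T:ℝ) - a + 1 := by
      rw [hcardF]
      have := haT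
      push_cast [this]
      ring
    have e3 : ∑ i, ((F.filter fun q => q.1 = i).card : ℝ) ≤ ∑ i, p i * ((T:ℝ) - a) :=
      Finset.sum_le_sum fun i _ => hfiber i
    have e4 : ∑ i, p i * ((T:ℝ) - a) = (T:ℝ) - a := by
      rw [← Finset.sum_mul, hsum, one_mul]
    have e2 : (F.card : ℝ) = ∑ i, ((F.filter fun q => q.1 = i).card : ℝ) := by
      rw [hsplit]
      push_cast
      ring
    linarith
  refine ⟨z, ?_⟩
  intro i t _
  rw [hcard]
  rw [abs_le]
  constructor
  · linarith [hupper t i]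
  · linarith [hlower t i]
end

section
/- For any Markov kernel p on a countable set V, any stack mechanism, any stack walk x_0, x_1, ..., any function f : V -> R with well-defined Laplacian, and any t: sum_{s=0}^{t-1} Delta f(x_s) = f(x_t) - f(x_0) + sum_{u,v in V} D_{n_t(u)}(u,v) [f(u) - f(v) + Delta f(u)], where D_n(u,v) := #{i <= n : u^{(i)} = v} - n p(u,v) and n_t(u) counts visits to u before time t. -/
open scoped BigOperators Classical

lemma nvisits_le {V : Type*} (x : ℕ → V) (t : ℕ) (v : V) : nvisits x t v ≤ t := by
  unfold nvisits
  exact (Finset.card_filter_le _ _).trans (Finset.card_range t).le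

lemma nvisits_lt_of_lt {V : Type*} (x : ℕ → V) {s t : ℕ} (hst : s < t) {u : V}
    (h : x s = u) : nvisits x s u < nvisits x t u := by
  unfold nvisits
  have hsub : insert s ((Finset.range s).filter fun a => x a = u) ⊆
      (Finset.range t).filter fun a => x a = u := by
    intro a ha
    rcases Finset.mem_insert.1 ha with rfl | ha
    · simp [Finset.mem_filter, Finset.mem_range, hst, h]
    · simp only [Finset.mem_filter, Finset.mem_range] at ha ⊢
      exact ⟨ha.1.trans hst, ha.2⟩
  calc ((Finset.range s).filter fun a => x a = u).card
      < (insert s ((Finset.range s).filter fun a => x a = u)).card := by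
        rw [Finset.card_insert_of_notMem (by simp)]; omega
    _ ≤ _ := Finset.card_le_card hsub

lemma nvisits_surj {V : Type*} (x : ℕ → V) (u : V) :
    ∀ t j, j < nvisits x t u → ∃ s, s < t ∧ x s = u ∧ nvisits x s u = j := by
  intro t
  induction t with
  | zero => simp [nvisits]
  | succ t ih =>
    intro j hj
    by_cases hxt : x t = u
    · have hsucc : nvisits x (t + 1) u = nvisits x t u + 1 := by
        unfold nvisits
        rw [Finset.range_add_one, Finset.filter_insert, if_pos hxt,
          Finset.card_insert_of_notMem (by simp)]
      rcases Nat.lt_or_ge j (nvisits x t u) with hlt | hge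
      · obtain ⟨s, h1, h2, h3⟩ := ih j hlt
        exact ⟨s, by omega, h2, h3⟩
      · exact ⟨t, by omega, hxt, by omega⟩
    · have hsucc : nvisits x (t + 1) u = nvisits x t u := by
        simp [nvisits, Finset.range_add_one, Finset.filter_insert, hxt]
      obtain ⟨s, h1, h2, h3⟩ := ih j (by omega)
      exact ⟨s, by omega, h2, h3⟩


/-- Proposition `stack-key`: the exact summation identity for stack walks.  The stack
mechanism assigns to each `u` an infinite sequence of successors `stack u 1, stack u 2, …`,
and the stack walk moves from `x_t` to the `(n_t(x_t)+1)`-st stacked successor of `x_t`.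
`D_n(u,v) = #\{i ≤ n : u^{(i)} = v\} - n p(u,v)`. -/
theorem stack_key_identity {V : Type*} [Countable V]
    (p : V → V → ℝ) (hpos : ∀ u v, 0 ≤ p u v) (hrow : ∀ u, HasSum (p u) 1)
    (hfin : ∀ u, (Function.support (p u)).Finite)
    (stack : V → ℕ → V)
    (x : ℕ → V) (hx : ∀ t, x (t + 1) = stack (x t) (nvisits x t (x t) + 1))
    (f : V → ℝ) (Δ : V → ℝ) (hΔ : ∀ u, Δ u = (∑' v, p u v * f v) - f u)
    (t : ℕ) :
    ∑ s ∈ Finset.range t, Δ (x s) =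
      f (x t) - f (x 0) +
        ∑' uv : V × V,
          (((((Finset.Icc 1 (nvisits x t uv.1)).filter
                fun i => stack uv.1 i = uv.2).card : ℝ)
              - (nvisits x t uv.1 : ℝ) * p uv.1 uv.2) *
            (f uv.1 - f uv.2 + Δ uv.1)) := by
  classical
  set S : Finset V := (Finset.range t).image x with hS
  set T : Finset V :=
    S.biUnion (fun u => ((Finset.Icc 1 t).image (stack u)) ∪ (hfin u).toFinset) with hT
  have hnS : ∀ u : V, u ∉ S → nvisits x t u = 0 := by
    intro u hu
    unfold nvisits
    rw [Finset.card_eq_zero, Finset.filter_eq_empty_iff]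
    intro s hs hxs
    exact hu (Finset.mem_image.2 ⟨s, hs, hxs⟩)
  have hxS : ∀ s, s < t → x s ∈ S :=
    fun s hs => Finset.mem_image.2 ⟨s, Finset.mem_range.2 hs, rfl⟩
  have hstackT : ∀ u ∈ S, ∀ i ∈ Finset.Icc 1 (nvisits x t u), stack u i ∈ T := by
    intro u hu i hi
    rw [Finset.mem_Icc] at hi
    refine Finset.mem_biUnion.2 ⟨u, hu, Finset.mem_union_left _ ?_⟩
    exact Finset.mem_image.2 ⟨i, Finset.mem_Icc.2 ⟨hi.1, hi.2.trans (nvisits_le x t u)⟩, rfl⟩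
  have hpT : ∀ u ∈ S, ∀ v, v ∉ T → p u v = 0 := by
    intro u hu v hv
    by_contra h
    exact hv (Finset.mem_biUnion.2 ⟨u, hu, Finset.mem_union_right _ ((hfin u).mem_toFinset.2 h)⟩)
  have hpsum : ∀ u ∈ S, ∑ v ∈ T, p u v = 1 := by
    intro u hu
    exact ((hrow u).unique (hasSum_sum_of_ne_finset_zero (fun v hv => hpT u hu v hv))).symm
  have hpfsum : ∀ u ∈ S, ∑ v ∈ T, p u v * f v = Δ u + f u := by
    intro u hu
    have h0 : ∀ v ∉ T, p u v * f v = 0 := fun v hv => by rw [hpT u hu v hv, zero_mul]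
    rw [← tsum_eq_sum (L := SummationFilter.unconditional V) h0, hΔ u]; ring
  have h0g : ∀ uv : V × V, uv ∉ S ×ˢ T →
      ((((Finset.Icc 1 (nvisits x t uv.1)).filter fun i => stack uv.1 i = uv.2).card : ℝ)
        - (nvisits x t uv.1 : ℝ) * p uv.1 uv.2) * (f uv.1 - f uv.2 + Δ uv.1) = 0 := by
    intro uv huv
    rw [Finset.mem_product, not_and_or] at huv
    by_cases h1 : uv.1 ∈ S
    · have h2 : uv.2 ∉ T := (huv.resolve_left (not_not_intro h1))
      have hc : ((Finset.Icc 1 (nvisits x t uv.1)).filter fun i => stack uv.1 i = uv.2) = ∅ := by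
        rw [Finset.filter_eq_empty_iff]
        intro i hi hstack
        exact h2 (hstack ▸ hstackT uv.1 h1 i hi)
      rw [hc, hpT uv.1 h1 uv.2 h2]
      simp
    · rw [hnS uv.1 h1]
      simp
  rw [tsum_eq_sum h0g, Finset.sum_product]
  have hinner : ∀ u ∈ S,
      (∑ v ∈ T, (((((Finset.Icc 1 (nvisits x t u)).filter fun i => stack u i = v).card : ℝ)
        - (nvisits x t u : ℝ) * p u v) * (f u - f v + Δ u)))
      = (nvisits x t u : ℝ) * (Δ u + f u)
          - ∑ i ∈ Finset.Icc 1 (nvisits x t u), f (stack u i) := by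
    intro u hu
    have hcsum : ∑ v ∈ T,
        ((((Finset.Icc 1 (nvisits x t u)).filter fun i => stack u i = v).card : ℝ))
        = (nvisits x t u : ℝ) := by
      have hnat : ∑ v ∈ T,
          (((Finset.Icc 1 (nvisits x t u)).filter fun i => stack u i = v).card)
          = nvisits x t u := by
        rw [← Finset.card_eq_sum_card_fiberwise (hstackT u hu)]
        simp
      rw [← Nat.cast_sum, hnat]
    have hcf : ∑ v ∈ T,
        ((((Finset.Icc 1 (nvisits x t u)).filter fun i => stack u i = v).card : ℝ)) * f v
        = ∑ i ∈ Finset.Icc 1 (nvisits x t u), f (stack u i) := by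
      rw [← Finset.sum_fiberwise_of_maps_to (hstackT u hu) (fun i => f (stack u i))]
      refine Finset.sum_congr rfl fun v hv => ?_
      have : ∑ i ∈ (Finset.Icc 1 (nvisits x t u)).filter (fun i => stack u i = v),
          f (stack u i)
          = (((Finset.Icc 1 (nvisits x t u)).filter fun i => stack u i = v).card : ℝ) * f v := by
        rw [Finset.sum_congr rfl (fun i hi => by rw [(Finset.mem_filter.1 hi).2]),
          Finset.sum_const, nsmul_eq_mul]
      rw [this]
    have expand : ∀ v ∈ T,
        (((((Finset.Icc 1 (nvisits x t u)).filter fun i => stack u i = v).card : ℝ)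
          - (nvisits x t u : ℝ) * p u v) * (f u - f v + Δ u))
        = (f u + Δ u) * ((((Finset.Icc 1 (nvisits x t u)).filter
              fun i => stack u i = v).card : ℝ))
          - ((((Finset.Icc 1 (nvisits x t u)).filter fun i => stack u i = v).card : ℝ)) * f v
          - ((nvisits x t u : ℝ) * (f u + Δ u)) * p u v
          + (nvisits x t u : ℝ) * (p u v * f v) := fun v _ => by ring
    rw [Finset.sum_congr rfl expand, Finset.sum_add_distrib, Finset.sum_sub_distrib,
      Finset.sum_sub_distrib, ← Finset.mul_sum, ← Finset.mul_sum, ← Finset.mul_sum,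
      hcsum, hcf, hpsum u hu, hpfsum u hu]
    ring
  rw [Finset.sum_congr rfl hinner, Finset.sum_sub_distrib]
  have h3 : ∑ u ∈ S, (nvisits x t u : ℝ) * (Δ u + f u)
      = ∑ s ∈ Finset.range t, (Δ (x s) + f (x s)) := by
    rw [← Finset.sum_fiberwise_of_maps_to (fun s hs => hxS s (Finset.mem_range.1 hs))
      (fun s => Δ (x s) + f (x s))]
    refine Finset.sum_congr rfl fun u hu => ?_
    rw [Finset.sum_congr rfl
        (fun s hs => by rw [(Finset.mem_filter.1 hs).2] :
          ∀ s ∈ (Finset.range t).filter (fun s => x s = u), Δ (x s) + f (x s) = Δ u + f u),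
      Finset.sum_const, nsmul_eq_mul]
    rfl
  have h4 : ∑ u ∈ S, ∑ i ∈ Finset.Icc 1 (nvisits x t u), f (stack u i)
      = ∑ s ∈ Finset.range t, f (x (s + 1)) := by
    rw [← Finset.sum_fiberwise_of_maps_to (fun s hs => hxS s (Finset.mem_range.1 hs))
      (fun s => f (x (s + 1)))]
    refine Finset.sum_congr rfl fun u hu => ?_
    refine (Finset.sum_bij (fun s _ => nvisits x s u + 1) ?_ ?_ ?_ ?_).symm
    · intro s hs
      rw [Finset.mem_filter, Finset.mem_range] at hs
      rw [Finset.mem_Icc]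
      have := nvisits_lt_of_lt x hs.1 hs.2
      omega
    · intro a ha b hb hab
      rw [Finset.mem_filter, Finset.mem_range] at ha hb
      by_contra hne
      rcases Ne.lt_or_gt hne with h | h
      · have := nvisits_lt_of_lt x h ha.2; omega
      · have := nvisits_lt_of_lt x h hb.2; omega
    · intro j hj
      rw [Finset.mem_Icc] at hj
      obtain ⟨s, h1, h2, h3⟩ := nvisits_surj x u t (j - 1) (by omega)
      exact ⟨s, Finset.mem_filter.2 ⟨Finset.mem_range.2 h1, h2⟩, by omega⟩
    · intro s hs
      rw [Finset.mem_filter] at hs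
      rw [hx s, hs.2]
  have h5 : ∑ s ∈ Finset.range t, f (x (s + 1))
      = f (x t) - f (x 0) + ∑ s ∈ Finset.range t, f (x s) := by
    have h := Finset.sum_range_sub (fun s => f (x s)) t
    rw [Finset.sum_sub_distrib] at h
    linarith
  rw [h3, h4, h5, Finset.sum_add_distrib]
  ring
end

section
/- Consider an irreducible Markov chain and an associated transfinite rotor walk started at vertex a (restarted at a each time it goes to infinity). Let I_n be the number of times the walk goes to infinity before the n-th return to a. Then limsup_{n -> infinity} I_n / n <= P_a(T_a^+ = infinity). -/
open scoped BigOperators Classical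

/-- `hitAux p b c t v` is the probability, for the Markov chain with kernel `p`
started at `v`, of hitting `b` before hitting `c` and within `t` steps. -/
noncomputable def hitAux {V : Type*} (p : V → V → ℝ) (b c : V) : ℕ → V → ℝ
  | 0, v => if v = b then 1 else 0
  | t + 1, v => if v = b then 1 else if v = c then 0 else ∑' w, p v w * hitAux p b c t w

/-- the hitting probability `h_{b,c}(v) = P_v(T_b < T_c)`, as the monotone limit of the
probabilities of hitting `b` before `c` within `t` steps.  (Taking `b = c` gives the
single-target hitting probability `P_v(T_b < ∞)`.) -/
noncomputable def hitProb {V : Type*} (p : V → V → ℝ) (b c : V) (v : V) : ℝ :=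
  ⨆ t, hitAux p b c t v

/-- the escape probability `e_{u,v} = P_u(T_v < T_u^+)`: a first step from `u` to `w`,
then hit `v` before `u`. -/
noncomputable def escProb {V : Type*} (p : V → V → ℝ) (u v : V) : ℝ :=
  ∑' w, p u w * hitProb p v u w

/-- irreducibility of the kernel: any vertex can be reached from any other by a path of
positive-probability steps -/
def IrreducibleKernel {V : Type*} (p : V → V → ℝ) : Prop :=
  ∀ u v : V, ∃ (n : ℕ) (f : ℕ → V), f 0 = u ∧ f n = v ∧ ∀ i < n, 0 < p (f i) (f (i + 1))

/-- A transfinite rotor walk started at `a`: a (finite or infinite) sequence of rotor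
walks `X m`, each started at `a`; every walk strictly before stage `M` is transient and
the next walk starts from its limiting rotor configuration; if `M` is finite, the walk at
stage `M` is recurrent (so the transfinite walk stops evolving there). -/
structure TransRW {V : Type*} (d : V → ℕ) (succ : V → ℕ → V) (a : V) where
  M : ℕ∞
  X : ℕ → ℕ → V
  R : ℕ → ℕ → V → ℕ
  walk : ∀ m : ℕ, (m : ℕ∞) ≤ M → IsRotorWalk d succ (X m) (R m) ∧ X m 0 = a
  transient : ∀ m : ℕ, (m : ℕ∞) < M → ∀ v, {t | X m t = v}.Finite
  limit : ∀ m : ℕ, (m : ℕ∞) < M → ∀ v, ∃ T, ∀ t, T ≤ t → R m t v = R (m + 1) 0 v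
  last_recurrent : ∀ m : ℕ, (m : ℕ∞) = M → ∀ v, {t | X m t = v}.Infinite

/-- `ntau W m t v` is the number of visits to `v` before the transfinite time
`τ = m·ω + t`: all visits during the first `m` (completed) walks, plus the visits of the
`m`-th walk before time `t`. -/
noncomputable def ntau {V : Type*} {d : V → ℕ} {succ : V → ℕ → V} {a : V}
    (W : TransRW d succ a) (m t : ℕ) (v : V) : ℕ :=
  (∑ m' ∈ Finset.range m, {s | W.X m' s = v}.ncard) + nvisits (W.X m) t v

/-- the number of visits to `a` before transfinite time `m·ω` -/
noncomputable def nReturns {V : Type*} {d : V → ℕ} {succ : V → ℕ → V} {a : V}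
    (W : TransRW d succ a) (m : ℕ) : ℕ :=
  ∑ m' ∈ Finset.range m, {s | W.X m' s = a}.ncard

/-- `I_n = max\{m ≥ 0 : n_{mω}(a) < n\}`, the number of escapes to infinity before the
`n`-th return to `a` -/
noncomputable def escapes {V : Type*} {d : V → ℕ} {succ : V → ℕ → V} {a : V}
    (W : TransRW d succ a) (n : ℕ) : ℕ :=
  sSup {m : ℕ | (m : ℕ∞) ≤ W.M ∧ nReturns W m < n}

section Density
variable {V : Type*} {d : V → ℕ} {succ : V → ℕ → V} {p : V → V → ℝ} {a : V}

lemma avg_eq (hreal : Realizes d succ p) (v : V) (f : V → ℝ) :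
    ∑' w, p v w * f w = (∑ i ∈ Finset.range (d v), f (succ v i)) / d v := by
  classical
  have h0 : ∀ w ∉ (Finset.range (d v)).image (succ v), p v w * f w = 0 := by
    intro w hw
    have he : ((Finset.range (d v)).filter fun i => succ v i = w) = ∅ := by
      ext i
      simp only [Finset.mem_filter, Finset.mem_range, Finset.notMem_empty, iff_false, not_and]
      intro hi hsi
      exact hw (Finset.mem_image.mpr ⟨i, Finset.mem_range.mpr hi, hsi⟩)
    rw [hreal.2 v w, he]
    simp
  rw [tsum_eq_sum h0]
  have : ∀ w ∈ (Finset.range (d v)).image (succ v),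
      p v w * f w = (∑ i ∈ (Finset.range (d v)).filter (fun i => succ v i = w), f (succ v i)) / d v := by
    intro w _
    rw [hreal.2 v w]
    rw [Finset.sum_congr rfl (fun i hi => by rw [(Finset.mem_filter.mp hi).2])]
    rw [Finset.sum_const, nsmul_eq_mul]
    ring
  rw [Finset.sum_congr rfl this, ← Finset.sum_div]
  congr 1
  exact Finset.sum_fiberwise_of_maps_to (fun i hi => Finset.mem_image_of_mem _ hi) _
lemma hitAux_nonneg (hreal : Realizes d succ p) (b c : V) :
    ∀ (t : ℕ) (v : V), 0 ≤ hitAux p b c t v := by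
  intro t
  induction t with
  | zero => intro v; simp only [hitAux]; positivity
  | succ t ih =>
    intro v
    simp only [hitAux]
    split
    · norm_num
    split
    · norm_num
    rw [avg_eq hreal]
    have : (0:ℝ) ≤ ∑ i ∈ Finset.range (d v), hitAux p b c t (succ v i) :=
      Finset.sum_nonneg fun i _ => ih _
    positivity

lemma hitAux_le_one (hreal : Realizes d succ p) (b c : V) :
    ∀ (t : ℕ) (v : V), hitAux p b c t v ≤ 1 := by
  intro t
  induction t with
  | zero =>
    intro v; simp only [hitAux]; split <;> norm_num
  | succ t ih =>
    intro v
    simp only [hitAux]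
    split
    · norm_num
    split
    · norm_num
    rw [avg_eq hreal]
    have hd : (0:ℝ) < d v := by exact_mod_cast hreal.1 v
    rw [div_le_one hd]
    calc ∑ i ∈ Finset.range (d v), hitAux p b c t (succ v i)
        ≤ ∑ _i ∈ Finset.range (d v), (1:ℝ) := Finset.sum_le_sum fun i _ => ih _
      _ = d v := by simp

lemma hitAux_mono (hreal : Realizes d succ p) (b c : V) :
    ∀ (t : ℕ) (v : V), hitAux p b c t v ≤ hitAux p b c (t + 1) v := by
  intro t
  induction t with
  | zero =>
    intro v
    by_cases hb : v = b
    · simp [hitAux, hb]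
    by_cases hc : v = c
    · simp [hitAux, hb, hc]
    simp only [hitAux, if_neg hb, if_neg hc]
    rw [avg_eq hreal]
    have : (0:ℝ) ≤ ∑ i ∈ Finset.range (d v), hitAux p b c 0 (succ v i) :=
      Finset.sum_nonneg fun i _ => hitAux_nonneg hreal b c 0 _
    positivity
  | succ t ih =>
    intro v
    by_cases hb : v = b
    · simp [hitAux, hb]
    by_cases hc : v = c
    · simp [hitAux, hb, hc]
    simp only [hitAux, if_neg hb, if_neg hc]
    rw [avg_eq hreal, avg_eq hreal]
    have hd : (0:ℝ) ≤ (d v : ℝ) := by positivity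
    gcongr with i hi
    exact ih _


lemma hitAux_mono' (hreal : Realizes d succ p) (b c : V) {s t : ℕ} (h : s ≤ t) (v : V) :
    hitAux p b c s v ≤ hitAux p b c t v := by
  induction h with
  | refl => exact le_refl _
  | step h ih => exact le_trans ih (hitAux_mono hreal b c _ v)

lemma hitProb_bdd (hreal : Realizes d succ p) (b c v : V) :
    BddAbove (Set.range fun t => hitAux p b c t v) := by
  refine ⟨1, ?_⟩
  rintro x ⟨t, rfl⟩
  exact hitAux_le_one hreal b c t v

lemma hitAux_le_hitProb (hreal : Realizes d succ p) (b c : V) (t : ℕ) (v : V) :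
    hitAux p b c t v ≤ hitProb p b c v :=
  le_ciSup (hitProb_bdd hreal b c v) t

lemma hitProb_le_one (hreal : Realizes d succ p) (b c v : V) : hitProb p b c v ≤ 1 :=
  ciSup_le fun t => hitAux_le_one hreal b c t v

lemma hitProb_nonneg (hreal : Realizes d succ p) (b c v : V) : 0 ≤ hitProb p b c v :=
  le_trans (hitAux_nonneg hreal b c 0 v) (hitAux_le_hitProb hreal b c 0 v)
noncomputable def Hf (d : V → ℕ) (succ : V → ℕ → V) (a : V) (B : Finset V) : ℕ → V → ℝ
  | 0, v => if v = a then 1 else 0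
  | s+1, v => if v = a then 1 else if v ∈ B then
      (∑ i ∈ Finset.range (d v), Hf d succ a B s (succ v i)) / d v else 0

lemma Hf_nonneg (hd : ∀ u, 0 < d u) (B : Finset V) : ∀ (s : ℕ) (v : V), 0 ≤ Hf d succ a B s v := by
  intro s
  induction s with
  | zero => intro v; simp only [Hf]; positivity
  | succ s ih =>
    intro v
    simp only [Hf]
    split
    · norm_num
    split
    · have : (0:ℝ) ≤ ∑ i ∈ Finset.range (d v), Hf d succ a B s (succ v i) :=
        Finset.sum_nonneg fun i _ => ih _
      positivity
    · norm_num

lemma Hf_le_one (hd : ∀ u, 0 < d u) (B : Finset V) : ∀ (s : ℕ) (v : V), Hf d succ a B s v ≤ 1 := by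
  intro s
  induction s with
  | zero => intro v; simp only [Hf]; split <;> norm_num
  | succ s ih =>
    intro v
    simp only [Hf]
    split
    · norm_num
    split
    · have hdv : (0:ℝ) < d v := by exact_mod_cast hd v
      rw [div_le_one hdv]
      calc ∑ i ∈ Finset.range (d v), Hf d succ a B s (succ v i)
          ≤ ∑ _i ∈ Finset.range (d v), (1:ℝ) := Finset.sum_le_sum fun i _ => ih _
        _ = d v := by simp
    · norm_num

lemma Hf_mono (hd : ∀ u, 0 < d u) (B : Finset V) :
    ∀ (s : ℕ) (v : V), Hf d succ a B s v ≤ Hf d succ a B (s+1) v := by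
  intro s
  induction s with
  | zero =>
    intro v
    by_cases hv : v = a
    · simp [Hf, hv]
    · simp only [Hf, if_neg hv]
      split
      · have : (0:ℝ) ≤ ∑ i ∈ Finset.range (d v), Hf d succ a B 0 (succ v i) :=
          Finset.sum_nonneg fun i _ => Hf_nonneg hd B 0 _
        positivity
      · norm_num
  | succ s ih =>
    intro v
    by_cases hv : v = a
    · simp [Hf, hv]
    · simp only [Hf, if_neg hv]
      split
      · gcongr with i hi
        exact ih _
      · norm_num

lemma Hf_monotone (hd : ∀ u, 0 < d u) (B : Finset V) (v : V) :
    Monotone fun s => Hf d succ a B s v :=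
  monotone_nat_of_le_succ fun s => Hf_mono hd B s v

noncomputable def hB (d : V → ℕ) (succ : V → ℕ → V) (a : V) (B : Finset V) (v : V) : ℝ :=
  ⨆ s, Hf d succ a B s v

lemma hB_bdd (hd : ∀ u, 0 < d u) (B : Finset V) (v : V) :
    BddAbove (Set.range fun s => Hf d succ a B s v) :=
  ⟨1, by rintro x ⟨s, rfl⟩; exact Hf_le_one hd B s v⟩

lemma Hf_le_hB (hd : ∀ u, 0 < d u) (B : Finset V) (s : ℕ) (v : V) :
    Hf d succ a B s v ≤ hB d succ a B v :=
  le_ciSup (hB_bdd hd B v) s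

lemma hB_nonneg (hd : ∀ u, 0 < d u) (B : Finset V) (v : V) : 0 ≤ hB d succ a B v :=
  le_trans (Hf_nonneg hd B 0 v) (Hf_le_hB hd B 0 v)

lemma hB_le_one (hd : ∀ u, 0 < d u) (B : Finset V) (v : V) : hB d succ a B v ≤ 1 :=
  ciSup_le fun s => Hf_le_one hd B s v


lemma hB_a (B : Finset V) : hB d succ a B a = 1 := by
  have : ∀ s, Hf d succ a B s a = 1 := by intro s; cases s <;> simp [Hf]
  simp only [hB, this, ciSup_const]

lemma hB_zero (B : Finset V) {v : V} (hv : v ∉ B) (hva : v ≠ a) : hB d succ a B v = 0 := by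
  have : ∀ s, Hf d succ a B s v = 0 := by intro s; cases s <;> simp [Hf, hva, hv]
  simp only [hB, this, ciSup_const]

lemma hB_harmonic (hd : ∀ u, 0 < d u) (B : Finset V) {v : V} (hvB : v ∈ B) (hva : v ≠ a) :
    hB d succ a B v = (∑ i ∈ Finset.range (d v), hB d succ a B (succ v i)) / d v := by
  have h1 : ∀ w, Filter.Tendsto (fun s => Hf d succ a B s w) Filter.atTop (nhds (hB d succ a B w)) :=
    fun w => tendsto_atTop_ciSup (Hf_monotone hd B w) (hB_bdd hd B w)
  have h2 : Filter.Tendsto (fun s => Hf d succ a B (s+1) v) Filter.atTop (nhds (hB d succ a B v)) :=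
    (h1 v).comp (Filter.tendsto_add_atTop_nat 1)
  have h3 : (fun s => Hf d succ a B (s+1) v)
      = fun s => (∑ i ∈ Finset.range (d v), Hf d succ a B s (succ v i)) / d v := by
    funext s; simp only [Hf, if_neg hva, if_pos hvB]
  rw [h3] at h2
  have h4 : Filter.Tendsto (fun s => (∑ i ∈ Finset.range (d v), Hf d succ a B s (succ v i)) / d v)
      Filter.atTop (nhds ((∑ i ∈ Finset.range (d v), hB d succ a B (succ v i)) / d v)) :=
    Filter.Tendsto.div_const (tendsto_finset_sum _ (fun i _ => h1 _)) _
  exact tendsto_nhds_unique h2 h4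

noncomputable def Reach (d : V → ℕ) (succ : V → ℕ → V) (a : V) : ℕ → Finset V
  | 0 => {a}
  | s+1 => Reach d succ a s ∪ (Reach d succ a s).biUnion (fun v => (Finset.range (d v)).image (succ v))

lemma Reach_subset_succ (s : ℕ) : Reach d succ a s ⊆ Reach d succ a (s+1) :=
  Finset.subset_union_left

lemma Reach_mono {s s' : ℕ} (h : s ≤ s') : Reach d succ a s ⊆ Reach d succ a s' := by
  induction h with
  | refl => exact subset_rfl
  | step h ih => exact ih.trans (Reach_subset_succ _)

lemma a_mem_Reach (s : ℕ) : a ∈ Reach d succ a s :=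
  Reach_mono (Nat.zero_le s) (by simp [Reach])

lemma succ_mem_Reach {s : ℕ} {v : V} (hv : v ∈ Reach d succ a s) {i : ℕ} (hi : i < d v) :
    succ v i ∈ Reach d succ a (s+1) := by
  simp only [Reach, Finset.mem_union, Finset.mem_biUnion]
  exact Or.inr ⟨v, hv, Finset.mem_image.mpr ⟨i, Finset.mem_range.mpr hi, rfl⟩⟩

lemma hitAux_le_Hf (hreal : Realizes d succ p) :
    ∀ (t s : ℕ) (w : V), w ∈ Reach d succ a s →
      hitAux p a a t w ≤ Hf d succ a (Reach d succ a (s + t)) t w := by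
  intro t
  induction t with
  | zero => intro s w _; simp [hitAux, Hf]
  | succ t ih =>
    intro s w hw
    by_cases hwa : w = a
    · simp [hitAux, Hf, hwa]
    · have hwB : w ∈ Reach d succ a (s + (t+1)) :=
        Reach_mono (Nat.le_add_right s (t+1)) hw
      simp only [hitAux, Hf, if_neg hwa, if_pos hwB]
      rw [avg_eq hreal]
      gcongr with i hi
      have h1 := ih (s+1) (succ w i) (succ_mem_Reach hw (Finset.mem_range.mp hi))
      have h2 : s + 1 + t = s + (t + 1) := by omega
      rwa [h2] at h1

lemma hitAux_le_hB (hreal : Realizes d succ p) (t s : ℕ) (w : V) (hw : w ∈ Reach d succ a s) :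
    hitAux p a a t w ≤ hB d succ a (Reach d succ a (s + t)) w :=
  le_trans (hitAux_le_Hf hreal t s w hw) (Hf_le_hB hreal.1 _ t w)
lemma nvisits_zero (x : ℕ → V) (v : V) : nvisits x 0 v = 0 := by simp [nvisits]

lemma nvisits_succ (x : ℕ → V) (t : ℕ) (v : V) :
    nvisits x (t+1) v = nvisits x t v + if x t = v then 1 else 0 := by
  unfold nvisits
  rw [Finset.range_add_one, Finset.filter_insert]
  split
  · rw [Finset.card_insert_of_notMem (by simp)]
  · simp

lemma nvisits_mono (x : ℕ → V) {t t' : ℕ} (h : t ≤ t') (v : V) :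
    nvisits x t v ≤ nvisits x t' v :=
  Finset.card_le_card (Finset.filter_subset_filter _ (Finset.range_subset_range.mpr h))

/-- reindexing a sum over visit times by the visit count -/
lemma sum_visits_eq (x : ℕ → V) (v : V) (F : ℕ → ℝ) :
    ∀ T : ℕ, ∑ t ∈ (Finset.range T).filter (fun t => x t = v), F (nvisits x t v)
      = ∑ j ∈ Finset.range (nvisits x T v), F j := by
  intro T
  induction T with
  | zero => simp [nvisits]
  | succ T ih =>
    rw [Finset.range_add_one, Finset.filter_insert, nvisits_succ]
    by_cases hT : x T = v
    · rw [if_pos hT, if_pos hT, Finset.sum_insert (by simp), ih, Finset.sum_range_succ]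
      ring
    · rw [if_neg hT, if_neg hT, ih, add_zero]

lemma rotor_count {x : ℕ → V} {r : ℕ → V → ℕ} (hw : IsRotorWalk d succ x r) :
    ∀ (t : ℕ) (v : V), r t v = (r 0 v + nvisits x t v) % d v := by
  intro t
  induction t with
  | zero =>
    intro v
    rw [nvisits_zero, Nat.add_zero, Nat.mod_eq_of_lt (hw.1 v)]
  | succ t ih =>
    intro v
    by_cases hv : v = x t
    · subst hv
      rw [hw.2.1 t, ih (x t), nvisits_succ, if_pos rfl, Nat.mod_add_mod, Nat.add_assoc]
    · rw [hw.2.2.1 t v hv, ih v, nvisits_succ, if_neg (fun h => hv h.symm), Nat.add_zero]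

/-- windows of a periodic zero-mean sequence are bounded -/
lemma window_bound (G : ℕ → ℝ) (D : ℕ) (hD : 0 < D) (hper : ∀ n, G (n + D) = G n)
    (hsum : ∑ i ∈ Finset.range D, G i = 0) (s L : ℕ) :
    |∑ j ∈ Finset.range L, G (s + j)| ≤ ∑ i ∈ Finset.range D, |G i| := by
  classical
  have hmul : ∀ (k n : ℕ), G (n + k * D) = G n := by
    intro k
    induction k with
    | zero => simp
    | succ k ih => intro n; rw [Nat.succ_mul, ← Nat.add_assoc, hper, ih]
  have hmod : ∀ n, G n = G (n % D) := by
    intro n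
    conv_lhs => rw [← Nat.mod_add_div' n D, hmul (n / D) (n % D)]
  have cycle0 : ∀ s', ∑ j ∈ Finset.range D, G (s' + j) = 0 := by
    intro s'
    induction s' with
    | zero => simpa using hsum
    | succ s' ih =>
      have key : ∑ j ∈ Finset.range (D + 1), G (s' + j)
          = (∑ j ∈ Finset.range D, G (s' + (j + 1))) + G (s' + 0) := Finset.sum_range_succ' _ D
      rw [Finset.sum_range_succ] at key
      have e1 : ∑ j ∈ Finset.range D, G (s' + 1 + j) = ∑ j ∈ Finset.range D, G (s' + (j + 1)) :=
        Finset.sum_congr rfl fun j _ => by rw [show s' + 1 + j = s' + (j + 1) by omega]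
      have e2 : G (s' + D) = G (s' + 0) := by rw [hper, Nat.add_zero]
      rw [e1]
      have := key
      rw [ih, e2] at this
      linarith
  have cycles : ∀ (q s' : ℕ), ∑ j ∈ Finset.range (q * D), G (s' + j) = 0 := by
    intro q
    induction q with
    | zero => simp
    | succ q ih =>
      intro s'
      rw [Nat.succ_mul, Finset.sum_range_add, ih]
      have : ∑ i ∈ Finset.range D, G (s' + (q * D + i)) = ∑ i ∈ Finset.range D, G ((s' + q * D) + i) :=
        Finset.sum_congr rfl fun i _ => by rw [Nat.add_assoc]
      rw [this, cycle0, add_zero]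
  -- reduce to the remainder window
  obtain ⟨q, rem, hrem, hL⟩ : ∃ q rem, rem < D ∧ L = q * D + rem :=
    ⟨L / D, L % D, Nat.mod_lt _ hD, by rw [Nat.mul_comm, Nat.div_add_mod]⟩
  subst hL
  rw [Finset.sum_range_add, cycles, zero_add]
  set s' := s + q * D with hs'
  have habs : |∑ i ∈ Finset.range rem, G (s + (q * D + i))| ≤ ∑ i ∈ Finset.range rem, |G (s' + i)| := by
    refine le_trans (Finset.abs_sum_le_sum_abs _ _) (le_of_eq ?_)
    exact Finset.sum_congr rfl fun i _ => by rw [← Nat.add_assoc]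
  refine habs.trans ?_
  have hre : ∀ i, |G (s' + i)| = |G ((s' + i) % D)| := fun i => by rw [← hmod]
  calc ∑ i ∈ Finset.range rem, |G (s' + i)|
      = ∑ i ∈ Finset.range rem, |G ((s' + i) % D)| := Finset.sum_congr rfl fun i _ => hre i
    _ = ∑ w ∈ (Finset.range rem).image (fun i => (s' + i) % D), |G w| := by
        rw [Finset.sum_image]
        intro i1 h1 i2 h2 heq
        have m1 : i1 % D = i2 % D := Nat.ModEq.add_left_cancel' s' heq
        rw [Nat.mod_eq_of_lt (lt_trans (Finset.mem_range.mp h1) hrem),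
            Nat.mod_eq_of_lt (lt_trans (Finset.mem_range.mp h2) hrem)] at m1
        exact m1
    _ ≤ ∑ i ∈ Finset.range D, |G i| := by
        apply Finset.sum_le_sum_of_subset_of_nonneg
        · intro w hw
          obtain ⟨i, _, rfl⟩ := Finset.mem_image.mp hw
          exact Finset.mem_range.mpr (Nat.mod_lt _ hD)
        · intro i _ _; positivity
/-- abstract concatenation of consecutive windows -/
lemma concat_windows (F : ℕ → ℝ) (n : ℕ → ℕ) :
    ∀ m : ℕ, ∑ m' ∈ Finset.range m, ∑ j ∈ Finset.range (n m'), F ((∑ k ∈ Finset.range m', n k) + j)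
      = ∑ j ∈ Finset.range (∑ k ∈ Finset.range m, n k), F j := by
  intro m
  induction m with
  | zero => simp
  | succ m ih =>
    rw [Finset.sum_range_succ, ih, Finset.sum_range_succ (fun k => n k) m, Finset.sum_range_add]

/-- the per-walk mass-transport inequality for a single transient rotor walk -/
lemma perwalk (hreal : Realizes d succ p) {x : ℕ → V} {r : ℕ → V → ℕ}
    (hw : IsRotorWalk d succ x r) (hx0 : x 0 = a) (B : Finset V) (haB : a ∈ B)
    (h : V → ℝ) (h0 : ∀ v, 0 ≤ h v) (hA : h a = 1)
    (hz : ∀ v ∉ B, h v = 0)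
    (hharm : ∀ v ∈ B, v ≠ a → h v = (∑ i ∈ Finset.range (d v), h (succ v i)) / d v)
    (T : ℕ) (hT : ∀ t, T ≤ t → x t ∉ B) :
    1 + ∑ t ∈ (Finset.range T).filter (fun t => x t ∈ B),
        (h (x (t+1)) - (∑ i ∈ Finset.range (d (x t)), h (succ (x t) i)) / d (x t))
      ≤ (1 - (∑ i ∈ Finset.range (d a), h (succ a i)) / d a) * nvisits x T a := by
  classical
  set hbar : V → ℝ := fun v => (∑ i ∈ Finset.range (d v), h (succ v i)) / d v with hbar_def
  have hxT : h (x T) = 0 := hz _ (hT T le_rfl)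
  have tel : ∑ t ∈ Finset.range T, (h (x (t+1)) - h (x t)) = -1 := by
    rw [Finset.sum_range_sub (fun t => h (x t)) T, hxT, hx0, hA]
    ring
  have split := Finset.sum_filter_add_sum_filter_not (Finset.range T)
    (fun t => x t ∈ B) (fun t => h (x (t+1)) - h (x t))
  have sout : 0 ≤ ∑ t ∈ (Finset.range T).filter (fun t => ¬ x t ∈ B), (h (x (t+1)) - h (x t)) := by
    apply Finset.sum_nonneg
    intro t ht
    have : h (x t) = 0 := hz _ (Finset.mem_filter.mp ht).2
    rw [this]
    simpa using h0 (x (t+1))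
  have sin : ∑ t ∈ (Finset.range T).filter (fun t => x t ∈ B), (h (x (t+1)) - h (x t))
      = (∑ t ∈ (Finset.range T).filter (fun t => x t ∈ B), (h (x (t+1)) - hbar (x t)))
        + ∑ t ∈ (Finset.range T).filter (fun t => x t ∈ B), (hbar (x t) - h (x t)) := by
    rw [← Finset.sum_add_distrib]
    exact Finset.sum_congr rfl fun t _ => by ring
  have sB : ∑ t ∈ (Finset.range T).filter (fun t => x t ∈ B), (hbar (x t) - h (x t))
      = (nvisits x T a : ℝ) * (hbar a - 1) := by
    have e1 : ∀ t ∈ (Finset.range T).filter (fun t => x t ∈ B),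
        hbar (x t) - h (x t) = if x t = a then hbar a - 1 else 0 := by
      intro t ht
      by_cases hta : x t = a
      · rw [if_pos hta, hta, hA]
      · rw [if_neg hta, hharm _ (Finset.mem_filter.mp ht).2 hta]
        ring
    rw [Finset.sum_congr rfl e1, ← Finset.sum_filter, Finset.filter_filter]
    have e2 : (Finset.range T).filter (fun t => x t ∈ B ∧ x t = a)
        = (Finset.range T).filter (fun t => x t = a) := by
      apply Finset.filter_congr
      intro t _
      constructor
      · exact fun hh => hh.2
      · exact fun hh => ⟨hh ▸ haB, hh⟩
    rw [e2, Finset.sum_const, nsmul_eq_mul]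
    rfl
  have hsum := split
  rw [sin, sB] at hsum
  rw [tel] at hsum
  nlinarith [sout]
noncomputable def nvW (W : TransRW d succ a) (m : ℕ) (v : V) : ℕ := {s | W.X m s = v}.ncard

noncomputable def KW (W : TransRW d succ a) (m : ℕ) (v : V) : ℕ :=
  ∑ m' ∈ Finset.range m, nvW W m' v

lemma nReturns_eq_KW (W : TransRW d succ a) (m : ℕ) : nReturns W m = KW W m a := rfl

section TopCase
variable {W : TransRW d succ a} (hM : W.M = ⊤)
include hM

lemma lt_M (m : ℕ) : (m : ℕ∞) < W.M := by
  rw [hM]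
  exact Ne.lt_top (by simp)

lemma walkW (m : ℕ) : IsRotorWalk d succ (W.X m) (W.R m) ∧ W.X m 0 = a :=
  W.walk m (le_of_lt (lt_M hM m))

lemma finW (m : ℕ) (v : V) : {s | W.X m s = v}.Finite := W.transient m (lt_M hM m) v

lemma nvisits_le_nvW (m : ℕ) (t : ℕ) (v : V) : nvisits (W.X m) t v ≤ nvW W m v := by
  classical
  rw [nvW, Set.ncard_eq_toFinset_card _ (finW hM m v)]
  apply Finset.card_le_card
  intro s hs
  rw [Set.Finite.mem_toFinset]
  exact (Finset.mem_filter.mp hs).2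

lemma nvisits_eq_nvW {m : ℕ} {v : V} {N : ℕ} (hN : ∀ s, W.X m s = v → s < N) :
    nvisits (W.X m) N v = nvW W m v := by
  classical
  rw [nvW, Set.ncard_eq_toFinset_card _ (finW hM m v)]
  unfold nvisits
  congr 1
  ext s
  simp only [Finset.mem_filter, Finset.mem_range, Set.Finite.mem_toFinset, Set.mem_setOf_eq]
  exact ⟨fun hh => hh.2, fun hh => ⟨hN s hh, hh⟩⟩

lemma exists_horizon (m : ℕ) (B : Finset V) :
    ∃ N, ∀ v ∈ B, ∀ s, W.X m s = v → s < N := by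
  classical
  have hfin : (⋃ v ∈ B, {s | W.X m s = v}).Finite :=
    Set.Finite.biUnion B.finite_toSet (fun v _ => finW hM m v)
  obtain ⟨N0, hN0⟩ := hfin.bddAbove
  refine ⟨N0 + 1, fun v hv s hs => ?_⟩
  have : s ∈ ⋃ v ∈ B, {s | W.X m s = v} := Set.mem_biUnion hv hs
  exact Nat.lt_succ_of_le (hN0 this)

lemma nvW_pos (m : ℕ) : 1 ≤ nvW W m a := by
  rw [nvW]
  exact (Set.ncard_pos (finW hM m a)).mpr ⟨0, (walkW hM m).2⟩

lemma m_le_nReturns (m : ℕ) : m ≤ nReturns W m := by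
  rw [nReturns_eq_KW]
  calc m = ∑ _m' ∈ Finset.range m, 1 := by simp
    _ ≤ ∑ m' ∈ Finset.range m, nvW W m' a := Finset.sum_le_sum fun m' _ => nvW_pos hM m'

lemma R_step (m : ℕ) (v : V) : W.R (m+1) 0 v = (W.R m 0 v + nvW W m v) % d v := by
  obtain ⟨T, hT⟩ := W.limit m (lt_M hM m) v
  obtain ⟨N, hN⟩ := exists_horizon hM m {v}
  have hNv : ∀ s, W.X m s = v → s < N := hN v (Finset.mem_singleton_self v)
  set t := max T N with ht
  have h1 : W.R m t v = W.R (m+1) 0 v := hT t (le_max_left _ _)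
  have h2 : W.R m t v = (W.R m 0 v + nvisits (W.X m) t v) % d v :=
    rotor_count (walkW hM m).1 t v
  have h3 : nvisits (W.X m) t v = nvW W m v := by
    refine le_antisymm (nvisits_le_nvW hM m t v) ?_
    rw [← nvisits_eq_nvW hM hNv]
    exact nvisits_mono _ (le_max_right _ _) v
  rw [← h1, h2, h3]

lemma R_zero_formula : ∀ (m : ℕ) (v : V), W.R m 0 v = (W.R 0 0 v + KW W m v) % d v := by
  intro m
  induction m with
  | zero =>
    intro v
    rw [KW]
    simp only [Finset.range_zero, Finset.sum_empty, Nat.add_zero]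
    exact (Nat.mod_eq_of_lt ((walkW hM 0).1.1 v)).symm
  | succ m ih =>
    intro v
    rw [R_step hM m v, ih v, Nat.mod_add_mod, Nat.add_assoc]
    congr 2
    rw [KW, KW, Finset.sum_range_succ]

lemma R_formula (m t : ℕ) (v : V) :
    W.R m t v = (W.R 0 0 v + (KW W m v + nvisits (W.X m) t v)) % d v := by
  rw [rotor_count (walkW hM m).1 t v, R_zero_formula hM m v, Nat.mod_add_mod, Nat.add_assoc]
lemma key_ineq (hreal : Realizes d succ p) (B : Finset V) (haB : a ∈ B)
    (h : V → ℝ) (h0 : ∀ v, 0 ≤ h v) (hA : h a = 1)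
    (hz : ∀ v ∉ B, h v = 0)
    (hharm : ∀ v ∈ B, v ≠ a → h v = (∑ i ∈ Finset.range (d v), h (succ v i)) / d v)
    (m : ℕ) :
    (m : ℝ) ≤ (1 - (∑ i ∈ Finset.range (d a), h (succ a i)) / d a) * (nReturns W m : ℝ)
      + ∑ v ∈ B, ∑ i ∈ Finset.range (d v),
          |h (succ v i) - (∑ k ∈ Finset.range (d v), h (succ v k)) / d v| := by
  classical
  set hbar : V → ℝ := fun v => (∑ i ∈ Finset.range (d v), h (succ v i)) / d v with hbar_def
  set e : ℝ := 1 - hbar a with he_def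
  set c : V → ℝ := fun v => ∑ i ∈ Finset.range (d v), |h (succ v i) - hbar v| with hc_def
  -- horizons
  have hhor : ∀ m' : ℕ, ∃ N, ∀ v ∈ B, ∀ s, W.X m' s = v → s < N := fun m' => exists_horizon hM m' B
  choose N hN using hhor
  have hout : ∀ (m' : ℕ) (t : ℕ), N m' ≤ t → W.X m' t ∉ B := by
    intro m' t ht hmem
    exact absurd (hN m' _ hmem t rfl) (by omega)
  -- per-walk inequality
  have hpw : ∀ m' : ℕ,
      1 + ∑ t ∈ (Finset.range (N m')).filter (fun t => W.X m' t ∈ B),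
          (h (W.X m' (t+1)) - hbar (W.X m' t))
        ≤ e * (nvW W m' a : ℝ) := by
    intro m'
    have := perwalk (p := p) hreal (walkW hM m').1 (walkW hM m').2 B haB h h0 hA hz hharm
      (N m') (hout m')
    have hnv : nvisits (W.X m') (N m') a = nvW W m' a := nvisits_eq_nvW hM (hN m' a haB)
    rw [hnv] at this
    exact this
  -- sum over walks
  have hsummed : (m : ℝ) + ∑ m' ∈ Finset.range m, ∑ t ∈ (Finset.range (N m')).filter
        (fun t => W.X m' t ∈ B), (h (W.X m' (t+1)) - hbar (W.X m' t))
      ≤ e * (nReturns W m : ℝ) := by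
    have h1 : ∑ m' ∈ Finset.range m, (1 + ∑ t ∈ (Finset.range (N m')).filter
          (fun t => W.X m' t ∈ B), (h (W.X m' (t+1)) - hbar (W.X m' t)))
        ≤ ∑ m' ∈ Finset.range m, e * (nvW W m' a : ℝ) :=
      Finset.sum_le_sum fun m' _ => hpw m'
    rw [Finset.sum_add_distrib, Finset.sum_const, Finset.card_range, nsmul_eq_mul, mul_one] at h1
    rw [← Finset.mul_sum] at h1
    have h2 : (nReturns W m : ℝ) = ∑ m' ∈ Finset.range m, (nvW W m' a : ℝ) := by
      rw [nReturns_eq_KW, KW]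
      push_cast
      rfl
    rw [h2]
    exact h1
  -- regroup the double sum by vertex
  set G : V → ℕ → ℝ := fun v n => h (succ v (n % d v)) - hbar v with hG_def
  have hregroup : ∀ m' : ℕ,
      ∑ t ∈ (Finset.range (N m')).filter (fun t => W.X m' t ∈ B),
          (h (W.X m' (t+1)) - hbar (W.X m' t))
        = ∑ v ∈ B, ∑ j ∈ Finset.range (nvW W m' v), G v (W.R 0 0 v + 1 + (KW W m' v + j)) := by
    intro m'
    rw [← Finset.sum_fiberwise_of_maps_to (g := fun t => W.X m' t)
      (fun t ht => (Finset.mem_filter.mp ht).2)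
      (fun t => h (W.X m' (t+1)) - hbar (W.X m' t))]
    apply Finset.sum_congr rfl
    intro v hv
    have hff : ((Finset.range (N m')).filter (fun t => W.X m' t ∈ B)).filter
        (fun t => W.X m' t = v) = (Finset.range (N m')).filter (fun t => W.X m' t = v) := by
      rw [Finset.filter_filter]
      apply Finset.filter_congr
      intro t _
      exact ⟨fun hh => hh.2, fun hh => ⟨hh ▸ hv, hh⟩⟩
    rw [hff]
    have hpt : ∀ t ∈ (Finset.range (N m')).filter (fun t => W.X m' t = v),
        h (W.X m' (t+1)) - hbar (W.X m' t)
          = G v (W.R 0 0 v + 1 + (KW W m' v + nvisits (W.X m') t v)) := by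
      intro t ht
      have htv : W.X m' t = v := (Finset.mem_filter.mp ht).2
      have hx1 : W.X m' (t+1) = succ v (W.R m' (t+1) v) := by
        rw [(walkW hM m').1.2.2.2 t, htv]
      have hr : W.R m' (t+1) v = (W.R 0 0 v + 1 + (KW W m' v + nvisits (W.X m') t v)) % d v := by
        rw [R_formula hM m' (t+1) v, nvisits_succ, if_pos htv]
        congr 1
        omega
      rw [hx1, hr, htv]
    rw [Finset.sum_congr rfl hpt]
    rw [sum_visits_eq (W.X m') v (fun j => G v (W.R 0 0 v + 1 + (KW W m' v + j))) (N m')]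
    rw [nvisits_eq_nvW hM (hN m' v hv)]
  have hregroup2 : ∑ m' ∈ Finset.range m, ∑ t ∈ (Finset.range (N m')).filter
        (fun t => W.X m' t ∈ B), (h (W.X m' (t+1)) - hbar (W.X m' t))
      = ∑ v ∈ B, ∑ j ∈ Finset.range (KW W m v), G v (W.R 0 0 v + 1 + j) := by
    rw [Finset.sum_congr rfl (fun m' _ => hregroup m'), Finset.sum_comm]
    apply Finset.sum_congr rfl
    intro v _
    have := concat_windows (fun j => G v (W.R 0 0 v + 1 + j)) (fun k => nvW W k v) m
    have e1 : ∀ m' ∈ Finset.range m, ∑ j ∈ Finset.range (nvW W m' v),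
        G v (W.R 0 0 v + 1 + (KW W m' v + j))
        = ∑ j ∈ Finset.range (nvW W m' v),
          (fun j => G v (W.R 0 0 v + 1 + j)) ((∑ k ∈ Finset.range m', nvW W k v) + j) := by
      intro m' _
      apply Finset.sum_congr rfl
      intro j _
      simp only [KW]
    rw [Finset.sum_congr rfl e1, this]
    rfl
  -- window bound per vertex
  have hwindow : ∀ v ∈ B, -(c v) ≤ ∑ j ∈ Finset.range (KW W m v), G v (W.R 0 0 v + 1 + j) := by
    intro v _
    have hper : ∀ n, G v (n + d v) = G v n := by
      intro n
      simp only [hG_def, Nat.add_mod_right]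
    have hdv : (0:ℝ) < d v := by exact_mod_cast hreal.1 v
    have hsum0 : ∑ i ∈ Finset.range (d v), G v i = 0 := by
      have e2 : ∀ i ∈ Finset.range (d v), G v i = h (succ v i) - hbar v := by
        intro i hi
        simp only [hG_def, Nat.mod_eq_of_lt (Finset.mem_range.mp hi)]
      rw [Finset.sum_congr rfl e2, Finset.sum_sub_distrib, Finset.sum_const, Finset.card_range,
        nsmul_eq_mul, hbar_def]
      field_simp
      ring
    have hwb := window_bound (G v) (d v) (hreal.1 v) hper hsum0 (W.R 0 0 v + 1) (KW W m v)
    have hcv : ∑ i ∈ Finset.range (d v), |G v i| = c v := by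
      apply Finset.sum_congr rfl
      intro i hi
      simp only [hG_def, Nat.mod_eq_of_lt (Finset.mem_range.mp hi), hc_def]
    rw [hcv] at hwb
    calc -(c v) ≤ -|∑ j ∈ Finset.range (KW W m v), G v (W.R 0 0 v + 1 + j)| := by linarith
      _ ≤ _ := neg_abs_le _
  have hlow : -(∑ v ∈ B, c v) ≤ ∑ v ∈ B, ∑ j ∈ Finset.range (KW W m v), G v (W.R 0 0 v + 1 + j) := by
    rw [← Finset.sum_neg_distrib]
    exact Finset.sum_le_sum hwindow
  rw [hregroup2] at hsummed
  have : (m:ℝ) - (∑ v ∈ B, c v) ≤ e * (nReturns W m : ℝ) := by linarith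
  simp only [hc_def] at this
  simp only [he_def, hbar_def] at this ⊢
  linarith
end TopCase
end Density

/-- **Transience density** (Theorem `density`, Oded Schramm):
`limsup_n I_n / n ≤ P_a(T_a^+ = ∞)`. -/
theorem transience_density {V : Type*} [Countable V]
    (d : V → ℕ) (succ : V → ℕ → V) (p : V → V → ℝ)
    (hreal : Realizes d succ p) (hirr : IrreducibleKernel p)
    (a : V) (W : TransRW d succ a) :
    Filter.limsup (fun n : ℕ => (escapes W n : ℝ) / (n : ℝ)) Filter.atTop ≤
      1 - ∑' w, p a w * hitProb p a a w := by
  classical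
  have hd := hreal.1
  have hda : (0:ℝ) < d a := by exact_mod_cast hd a
  have havg := avg_eq hreal a (hitProb p a a)
  by_cases hM : W.M = ⊤
  · refine le_of_forall_pos_le_add fun ε hε => ?_
    have hex : ∀ i : ℕ, ∃ t, hitProb p a a (succ a i) - ε/2 < hitAux p a a t (succ a i) := by
      intro i
      have hlt : hitProb p a a (succ a i) - ε / 2 < ⨆ t, hitAux p a a t (succ a i) := by
        rw [show (⨆ t, hitAux p a a t (succ a i)) = hitProb p a a (succ a i) from rfl]
        linarith
      exact exists_lt_of_lt_ciSup hlt
    choose tf htf using hex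
    set t : ℕ := (Finset.range (d a)).sup tf with ht_def
    have htt : ∀ i ∈ Finset.range (d a),
        hitProb p a a (succ a i) - ε/2 ≤ hitAux p a a t (succ a i) := fun i hi =>
      le_trans (le_of_lt (htf i)) (hitAux_mono' hreal a a (Finset.le_sup hi) _)
    set B : Finset V := Reach d succ a (1 + t) with hB_def2
    set h : V → ℝ := hB d succ a B with hh_def
    have haB : a ∈ B := a_mem_Reach _
    have h0 : ∀ v, 0 ≤ h v := hB_nonneg hd B
    have h1 : ∀ v, h v ≤ 1 := hB_le_one hd B
    have hAa : h a = 1 := hB_a B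
    have hz : ∀ v ∉ B, h v = 0 := fun v hv => hB_zero B hv (fun hva => hv (hva ▸ haB))
    have hharm : ∀ v ∈ B, v ≠ a → h v = (∑ i ∈ Finset.range (d v), h (succ v i)) / d v :=
      fun v hv hva => hB_harmonic hd B hv hva
    set e : ℝ := 1 - (∑ i ∈ Finset.range (d a), h (succ a i)) / d a with he_def
    set C : ℝ := ∑ v ∈ B, ∑ i ∈ Finset.range (d v),
        |h (succ v i) - (∑ k ∈ Finset.range (d v), h (succ v k)) / d v| with hC_def
    have hC0 : 0 ≤ C :=
      Finset.sum_nonneg fun v _ => Finset.sum_nonneg fun i _ => abs_nonneg _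
    have he0 : 0 ≤ e := by
      rw [he_def]
      have hle : ∑ i ∈ Finset.range (d a), h (succ a i) ≤ (d a : ℝ) := by
        calc ∑ i ∈ Finset.range (d a), h (succ a i) ≤ ∑ _i ∈ Finset.range (d a), (1:ℝ) :=
            Finset.sum_le_sum fun i _ => h1 _
          _ = d a := by simp
      have := (div_le_one hda).mpr hle
      linarith
    have heRHS : e ≤ (1 - ∑' w, p a w * hitProb p a a w) + ε/2 := by
      rw [he_def, havg]
      have hge : ∀ i ∈ Finset.range (d a), hitProb p a a (succ a i) - ε/2 ≤ h (succ a i) := by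
        intro i hi
        refine le_trans (htt i hi) ?_
        have hmem : succ a i ∈ Reach d succ a 1 :=
          succ_mem_Reach (a_mem_Reach 0) (Finset.mem_range.mp hi)
        exact hitAux_le_hB hreal t 1 _ hmem
      have hsum : ∑ i ∈ Finset.range (d a), (hitProb p a a (succ a i) - ε/2)
          ≤ ∑ i ∈ Finset.range (d a), h (succ a i) := Finset.sum_le_sum hge
      rw [Finset.sum_sub_distrib, Finset.sum_const, Finset.card_range, nsmul_eq_mul] at hsum
      have h2 : (∑ i ∈ Finset.range (d a), hitProb p a a (succ a i) - (d a : ℝ) * (ε/2)) / d a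
          ≤ (∑ i ∈ Finset.range (d a), h (succ a i)) / d a := by gcongr
      have h3 : (∑ i ∈ Finset.range (d a), hitProb p a a (succ a i) - (d a : ℝ) * (ε/2)) / d a
          = (∑ i ∈ Finset.range (d a), hitProb p a a (succ a i)) / d a - ε/2 := by
        rw [sub_div, mul_div_cancel_left₀ _ (ne_of_gt hda)]
      rw [h3] at h2
      linarith
    have hkey := key_ineq hM hreal B haB h h0 hAa hz hharm
    have hesc : ∀ n : ℕ, 1 ≤ n → (escapes W n : ℝ) ≤ e * n + C := by
      intro n hn
      have h0S : 0 ∈ {m : ℕ | (m:ℕ∞) ≤ W.M ∧ nReturns W m < n} := by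
        constructor
        · simp [hM]
        · have : nReturns W 0 = 0 := by simp [nReturns]
          omega
      have hbdd : BddAbove {m : ℕ | (m:ℕ∞) ≤ W.M ∧ nReturns W m < n} := by
        refine ⟨n, fun m hm => ?_⟩
        have := m_le_nReturns hM m
        have := hm.2
        omega
      have hmem : escapes W n ∈ {m : ℕ | (m:ℕ∞) ≤ W.M ∧ nReturns W m < n} := by
        rw [escapes]
        exact Nat.sSup_mem ⟨0, h0S⟩ hbdd
      have hlt : nReturns W (escapes W n) < n := hmem.2
      have hk := hkey (escapes W n)
      rw [← he_def, ← hC_def] at hk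
      have h4 : (nReturns W (escapes W n) : ℝ) ≤ n := by exact_mod_cast le_of_lt hlt
      nlinarith [mul_le_mul_of_nonneg_left h4 he0]
    have hev : ∀ᶠ n : ℕ in Filter.atTop,
        (escapes W n : ℝ) / n ≤ (1 - ∑' w, p a w * hitProb p a a w) + ε := by
      have htend : Filter.Tendsto (fun n : ℕ => C / n) Filter.atTop (nhds 0) :=
        tendsto_const_div_atTop_nhds_zero_nat C
      have hev2 : ∀ᶠ n : ℕ in Filter.atTop, C / n < ε/2 :=
        htend.eventually (gt_mem_nhds (by linarith))
      filter_upwards [hev2, Filter.eventually_ge_atTop 1] with n hn1 hn2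
      have hnR : (0:ℝ) < n := by exact_mod_cast hn2
      have hdiv : (escapes W n : ℝ)/n ≤ e + C/n := by
        rw [div_le_iff₀ hnR]
        have he2 : (e + C/n) * n = e*n + C := by field_simp
        rw [he2]
        exact hesc n hn2
      linarith
    refine Filter.limsup_le_of_le ?_ hev
    exact Filter.isCoboundedUnder_le_of_le _ (fun n => by positivity)
  · obtain ⟨N, hN⟩ := WithTop.ne_top_iff_exists.mp hM
    have hconst : ∀ n, nReturns W N + 1 ≤ n → escapes W n = N := by
      intro n hn
      have hmemN : N ∈ {m : ℕ | (m:ℕ∞) ≤ W.M ∧ nReturns W m < n} := by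
        refine ⟨le_of_eq hN, by omega⟩

      have hub : ∀ m ∈ {m : ℕ | (m:ℕ∞) ≤ W.M ∧ nReturns W m < n}, m ≤ N := by
        intro m hm
        have h5 := hm.1
        rw [← hN] at h5
        exact ENat.coe_le_coe.mp h5
      rw [escapes]
      exact le_antisymm (csSup_le ⟨N, hmemN⟩ hub) (le_csSup ⟨N, hub⟩ hmemN)
    have heq : (fun n : ℕ => (escapes W n : ℝ)/n) =ᶠ[Filter.atTop] fun n : ℕ => (N:ℝ)/n := by
      filter_upwards [Filter.eventually_ge_atTop (nReturns W N + 1)] with n hn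
      rw [hconst n hn]
    have htend : Filter.Tendsto (fun n : ℕ => (escapes W n : ℝ)/n) Filter.atTop (nhds 0) :=
      Filter.Tendsto.congr' heq.symm (tendsto_const_div_atTop_nhds_zero_nat (N:ℝ))
    rw [htend.limsup_eq, havg]
    have hle : (∑ i ∈ Finset.range (d a), hitProb p a a (succ a i)) / d a ≤ 1 := by
      rw [div_le_one hda]
      calc ∑ i ∈ Finset.range (d a), hitProb p a a (succ a i)
          ≤ ∑ _i ∈ Finset.range (d a), (1:ℝ) :=
            Finset.sum_le_sum fun i _ => hitProb_le_one hreal a a _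
        _ = d a := by simp
    linarith
end
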